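/- arXiv:1707.02799 — 2 statements merged into one kernel-verified Lean document; each statement's English description precedes it below -/
import Mathlib

section
/- Let 0 ≤ λ ≤ 1. If X is a one-sided λ-local spectral expander, then for every 0 ≤ k ≤ n−1 and every φ ∈ C^k_0(X,ℝ), ‖M⁺_k φ‖ ≤ ( (k+1)/(k+2) + (k+1)λ ) ‖φ‖. -/
/-!
Framework: a pure `n`-dimensional finite weighted simplicial complex, following
Kaufman–Oppenheim, "High Order Random Walks: Beyond Spectral Gap".

A complex is given by its finset of faces (finsets of a vertex type `V`) together with
a weight function `m`.  We index levels by **cardinality**: `X.K c` is the set of faces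
with `c` elements, i.e. the set `X(k)` of `k`-dimensional faces for `k = c - 1`
(so `X(-1) = X.K 0`, and a pure `n`-dimensional complex has top level `X.K (n+1)`).
-/

noncomputable section

open Finset

/-- The data of a weighted simplicial complex: a finite family of faces and a weight. -/
structure WSC (V : Type*) [DecidableEq V] where
  faces : Finset (Finset V)
  m : Finset V → ℝ

namespace WSC

variable {V : Type*} [DecidableEq V]

/-- `X.IsWSC n` : `X` is a pure `n`-dimensional finite weighted simplicial complex:
the faces form a nonempty downward-closed family, every face is contained in a face with
`n+1` elements (and no face has more), the weights are positive, and the weight of every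
face of cardinality `≤ n` is the sum of the weights of the faces covering it. -/
def IsWSC (X : WSC V) (n : ℕ) : Prop :=
  ∅ ∈ X.faces ∧
  (∀ ⦃σ τ : Finset V⦄, σ ∈ X.faces → τ ⊆ σ → τ ∈ X.faces) ∧
  (∀ ⦃σ⦄, σ ∈ X.faces → σ.card ≤ n + 1) ∧
  (∀ ⦃σ⦄, σ ∈ X.faces → ∃ η ∈ X.faces, σ ⊆ η ∧ η.card = n + 1) ∧
  (∀ ⦃σ⦄, σ ∈ X.faces → 0 < X.m σ) ∧
  (∀ ⦃τ⦄, τ ∈ X.faces → τ.card ≤ n →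
    X.m τ = ∑ σ ∈ X.faces.filter (fun σ => τ ⊆ σ ∧ σ.card = τ.card + 1), X.m σ)

/-- `X.K c` : the faces with `c` elements, i.e. `X(c-1)` in dimension indexing. -/
def K (X : WSC V) (c : ℕ) : Finset (Finset V) := X.faces.filter (fun σ => σ.card = c)

/-- The weighted inner product on cochains supported on the faces with `c` elements. -/
def inn (X : WSC V) (c : ℕ) (φ ψ : Finset V → ℝ) : ℝ :=
  ∑ σ ∈ X.K c, X.m σ * (φ σ * ψ σ)

/-- The squared norm of a cochain on the faces with `c` elements. -/
def normSq (X : WSC V) (c : ℕ) (φ : Finset V → ℝ) : ℝ := X.inn c φ φ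

/-- The norm of a cochain on the faces with `c` elements. -/
def norm (X : WSC V) (c : ℕ) (φ : Finset V → ℝ) : ℝ := Real.sqrt (X.normSq c φ)

/-- `X.cochainZero c φ` : φ belongs to `C^{c-1}_0 (X, ℝ)`, i.e. it is orthogonal to the
constant functions at level `c`. -/
def cochainZero (X : WSC V) (c : ℕ) (φ : Finset V → ℝ) : Prop :=
  ∑ σ ∈ X.K c, X.m σ * φ σ = 0

/-- The signless differential, from cochains at level `c` to cochains at level `c+1`:
`(d φ)(σ) = ∑_{τ ∈ X(c-1), τ ⊂ σ} φ(τ)`. -/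
def d (X : WSC V) (c : ℕ) (φ : Finset V → ℝ) : Finset V → ℝ :=
  fun σ => ∑ τ ∈ (X.K c).filter (fun τ => τ ⊆ σ), φ τ

/-- The (explicit formula for the) adjoint of the signless differential, from cochains at
level `c+1` to cochains at level `c`: `(d* ψ)(τ) = ∑_{σ ⊇ τ} (m σ / m τ) ψ(σ)`. -/
def dStar (X : WSC V) (c : ℕ) (ψ : Finset V → ℝ) : Finset V → ℝ :=
  fun τ => ∑ σ ∈ (X.K (c + 1)).filter (fun σ => τ ⊆ σ), (X.m σ / X.m τ) * ψ σ

/-- The (lazy) upper random walk operator `M⁺` on cochains at level `c`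
(i.e. on `k`-cochains for `k = c-1`; note `k + 2 = c + 1`). -/
def Mup (X : WSC V) (c : ℕ) (φ : Finset V → ℝ) : Finset V → ℝ :=
  fun τ => (1 / ((c : ℝ) + 1)) * φ τ +
    ∑ τ' ∈ (X.K c).filter (fun τ' => τ ∪ τ' ∈ X.K (c + 1)),
      (X.m (τ ∪ τ') / (((c : ℝ) + 1) * X.m τ)) * φ τ'

/-- The lower random walk operator `M⁻` on cochains at level `c`
(i.e. on `k`-cochains for `k = c-1`; note `k + 1 = c`). -/
def Mdown (X : WSC V) (c : ℕ) (φ : Finset V → ℝ) : Finset V → ℝ :=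
  fun τ => (∑ η ∈ (X.K (c - 1)).filter (fun η => η ⊆ τ), X.m τ / ((c : ℝ) * X.m η)) * φ τ +
    ∑ τ' ∈ (X.K c).filter (fun τ' => τ' ≠ τ ∧ τ ∩ τ' ∈ X.K (c - 1)),
      (X.m τ' / ((c : ℝ) * X.m (τ ∩ τ'))) * φ τ'

/-- The non-lazy upper random walk operator `(M')⁺ = ((k+2)/(k+1)) M⁺ - (1/(k+1)) I`
on cochains at level `c = k+1`. -/
def Mup' (X : WSC V) (c : ℕ) (φ : Finset V → ℝ) : Finset V → ℝ :=
  fun τ => (((c : ℝ) + 1) / (c : ℝ)) * X.Mup c φ τ - (1 / (c : ℝ)) * φ τ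

/-- The link `X_τ` of a face `τ`, with the induced weight `m_τ (η) = m (τ ∪ η)`. -/
def link (X : WSC V) (τ : Finset V) : WSC V where
  faces := X.faces.filter (fun η => η ∩ τ = ∅ ∧ τ ∪ η ∈ X.faces)
  m := fun η => X.m (τ ∪ η)

/-- The localization `φ_τ (η) = φ (τ ∪ η)` of a cochain `φ` to the link of `τ`. -/
def localize (φ : Finset V → ℝ) (τ : Finset V) : Finset V → ℝ := fun η => φ (τ ∪ η)

/-- The underlying graph (1-skeleton) of a complex. -/
def skeleton (Y : WSC V) : SimpleGraph {v : V // ({v} : Finset V) ∈ Y.faces} where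
  Adj u w := u ≠ w ∧ ({(u : V), (w : V)} : Finset V) ∈ Y.faces
  symm := by
    constructor
    intro u w h
    refine ⟨h.1.symm, ?_⟩
    rw [Finset.pair_comm]
    exact h.2
  loopless := by constructor; intro u h; exact h.1 rfl

/-- All links of `X` of dimension `≥ 1` (including `X` itself, as the link of `∅`)
have a connected underlying graph. -/
def LinksConnected (X : WSC V) (n : ℕ) : Prop :=
  ∀ c < n, ∀ τ ∈ X.K c, (X.link τ).skeleton.Connected

/-- The second largest eigenvalue of the self-adjoint operator `(M')⁺₀` on `C⁰(Y, ℝ)`,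
via its Rayleigh-quotient characterization over the orthogonal complement of the
constant functions (the top eigenfunction). -/
def secondEig (Y : WSC V) : ℝ :=
  sSup {r : ℝ | ∃ ψ : Finset V → ℝ, Y.normSq 1 ψ ≠ 0 ∧
    (∑ v ∈ Y.K 1, Y.m v * ψ v) = 0 ∧ r = Y.inn 1 (Y.Mup' 1 ψ) ψ / Y.normSq 1 ψ}

/-- The smallest eigenvalue of the self-adjoint operator `(M')⁺₀` on `C⁰(Y, ℝ)`,
via its Rayleigh-quotient characterization. -/
def smallestEig (Y : WSC V) : ℝ :=
  sInf {r : ℝ | ∃ ψ : Finset V → ℝ, Y.normSq 1 ψ ≠ 0 ∧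
    r = Y.inn 1 (Y.Mup' 1 ψ) ψ / Y.normSq 1 ψ}

/-- `μ_k = max_{τ ∈ X(k-1)} μ_τ` where `μ_τ` is the second largest eigenvalue of
`(M')⁺_{τ,0}`; faces `τ ∈ X(k-1)` have `k` elements. -/
def mu (X : WSC V) (k : ℕ) : ℝ :=
  sSup {r : ℝ | ∃ τ ∈ X.K k, r = (X.link τ).secondEig}

/-- `ν_k = min_{τ ∈ X(k-1)} ν_τ` where `ν_τ` is the smallest eigenvalue of
`(M')⁺_{τ,0}`; faces `τ ∈ X(k-1)` have `k` elements. -/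
def nu (X : WSC V) (k : ℕ) : ℝ :=
  sInf {r : ℝ | ∃ τ ∈ X.K k, r = (X.link τ).smallestEig}

/-- `X` is a one-sided `λ`-local spectral expander: `μ_k ≤ λ` for every `0 ≤ k ≤ n-1`. -/
def OneSided (X : WSC V) (n : ℕ) (lam : ℝ) : Prop := ∀ k < n, X.mu k ≤ lam

/-- `X` is a two-sided `λ`-local spectral expander: `μ_k ≤ λ` and `ν_k ≥ -λ`
for every `0 ≤ k ≤ n-1`. -/
def TwoSided (X : WSC V) (n : ℕ) (lam : ℝ) : Prop :=
  ∀ k < n, X.mu k ≤ lam ∧ -lam ≤ X.nu k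

/-! ### Auxiliary development for the proof of `mixing_lazy_walk` -/

section Aux

variable {X : WSC V} {n : ℕ}

/-- The off-diagonal quadratic/bilinear form at level `c`. -/
def Eg (X : WSC V) (c : ℕ) (f g : Finset V → ℝ) : ℝ :=
  ∑ σ ∈ X.K c, ∑ σ' ∈ (X.K c).filter (fun σ' => σ ∪ σ' ∈ X.K (c + 1)),
    X.m (σ ∪ σ') * f σ' * g σ

/-- The edge quadratic form of (a link) `Y` at level `1`. -/
def Qf (Y : WSC V) (f : Finset V → ℝ) : ℝ :=
  ∑ v ∈ Y.K 1, ∑ w ∈ (Y.K 1).filter (fun w => v ∪ w ∈ Y.K 2),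
    Y.m (v ∪ w) * f w * f v

lemma mem_K {c : ℕ} {σ : Finset V} : σ ∈ X.K c ↔ σ ∈ X.faces ∧ σ.card = c := by
  simp [K]

lemma m_pos (hX : X.IsWSC n) {σ : Finset V} (h : σ ∈ X.faces) : 0 < X.m σ :=
  hX.2.2.2.2.1 h

lemma le_of_sq_le_sq {x y : ℝ} (hx : 0 ≤ x) (hy : 0 ≤ y) (h : x ^ 2 ≤ y ^ 2) : x ≤ y := by
  nlinarith

/-- Swapping a filtered double sum. -/
lemma pswap {α β : Type*} [DecidableEq α] [DecidableEq β] (A : Finset α) (B : Finset β)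
    (p : α → β → Prop) [∀ a b, Decidable (p a b)] (f : α → β → ℝ) :
    ∑ a ∈ A, ∑ b ∈ B.filter (fun b => p a b), f a b
      = ∑ b ∈ B, ∑ a ∈ A.filter (fun a => p a b), f a b := by
  simp only [Finset.sum_filter]
  exact Finset.sum_comm

lemma normSq_nonneg {Y : WSC V} {c : ℕ} (hm : ∀ σ ∈ Y.K c, 0 < Y.m σ) (f : Finset V → ℝ) :
    0 ≤ Y.normSq c f := by
  apply Finset.sum_nonneg
  intro σ hσ
  have := hm σ hσ
  nlinarith [sq_nonneg (f σ)]

lemma innCS (hX : X.IsWSC n) (c : ℕ) (f g : Finset V → ℝ) :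
    (X.inn c f g) ^ 2 ≤ X.normSq c f * X.normSq c g := by
  have h := Finset.sum_mul_sq_le_sq_mul_sq (X.K c)
    (fun σ => Real.sqrt (X.m σ) * f σ) (fun σ => Real.sqrt (X.m σ) * g σ)
  have e1 : ∀ σ ∈ X.K c, Real.sqrt (X.m σ) * f σ * (Real.sqrt (X.m σ) * g σ)
      = X.m σ * (f σ * g σ) := by
    intro σ hσ
    have : Real.sqrt (X.m σ) * Real.sqrt (X.m σ) = X.m σ :=
      Real.mul_self_sqrt (m_pos hX (mem_K.1 hσ).1).le
    calc Real.sqrt (X.m σ) * f σ * (Real.sqrt (X.m σ) * g σ)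
        = Real.sqrt (X.m σ) * Real.sqrt (X.m σ) * (f σ * g σ) := by ring
      _ = X.m σ * (f σ * g σ) := by rw [this]
  have e2 : ∀ (f' : Finset V → ℝ), ∀ σ ∈ X.K c, (Real.sqrt (X.m σ) * f' σ) ^ 2
      = X.m σ * (f' σ * f' σ) := by
    intro f' σ hσ
    have : Real.sqrt (X.m σ) * Real.sqrt (X.m σ) = X.m σ :=
      Real.mul_self_sqrt (m_pos hX (mem_K.1 hσ).1).le
    calc (Real.sqrt (X.m σ) * f' σ) ^ 2
        = Real.sqrt (X.m σ) * Real.sqrt (X.m σ) * (f' σ * f' σ) := by ring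
      _ = X.m σ * (f' σ * f' σ) := by rw [this]
  rw [Finset.sum_congr rfl e1, Finset.sum_congr rfl (e2 f), Finset.sum_congr rfl (e2 g)] at h
  exact h

lemma eq_zero_of_normSq_eq_zero {Y : WSC V} {c : ℕ} (hm : ∀ σ ∈ Y.K c, 0 < Y.m σ)
    {f : Finset V → ℝ} (h : Y.normSq c f = 0) {σ : Finset V} (hσ : σ ∈ Y.K c) : f σ = 0 := by
  have hnn : ∀ σ ∈ Y.K c, 0 ≤ Y.m σ * (f σ * f σ) := by
    intro σ hσ
    have := hm σ hσ
    nlinarith [sq_nonneg (f σ)]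
  have h2 := (Finset.sum_eq_zero_iff_of_nonneg hnn).1 h σ hσ
  rcases mul_eq_zero.1 h2 with h3 | h3
  · exact absurd h3 (hm σ hσ).ne'
  · exact mul_self_eq_zero.1 h3

lemma K_filter_eq_powersetCard (hX : X.IsWSC n) {σ : Finset V} (hσ : σ ∈ X.faces) (j : ℕ) :
    (X.K j).filter (fun τ => τ ⊆ σ) = σ.powersetCard j := by
  ext τ
  simp only [Finset.mem_filter, mem_K, Finset.mem_powersetCard]
  constructor
  · rintro ⟨⟨hf, hc⟩, hs⟩; exact ⟨hs, hc⟩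
  · rintro ⟨hs, hc⟩; exact ⟨⟨hX.2.1 hσ hs, hc⟩, hs⟩

lemma weight_K (hX : X.IsWSC n) {τ : Finset V} (hτ : τ ∈ X.faces) (hc : τ.card ≤ n) :
    X.m τ = ∑ σ ∈ (X.K (τ.card + 1)).filter (fun σ => τ ⊆ σ), X.m σ := by
  have h := hX.2.2.2.2.2 hτ hc
  rw [h]
  apply Finset.sum_congr _ (fun _ _ => rfl)
  ext σ
  simp only [Finset.mem_filter, mem_K]
  tauto

lemma union_eq_of_card {c : ℕ} {ρ τ' σ : Finset V} (hρ : ρ.card = c)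
    (hτ' : τ'.card = c) (hσ : σ.card = c + 1) (h1 : ρ ⊆ σ) (h2 : τ' ⊆ σ)
    (hne : τ' ≠ ρ) : ρ ∪ τ' = σ := by
  have hsub : ρ ∪ τ' ⊆ σ := Finset.union_subset h1 h2
  have hlt : c + 1 ≤ (ρ ∪ τ').card := by
    rcases Nat.lt_or_ge c (ρ ∪ τ').card with h | h
    · omega
    · exfalso
      have h3 : ρ = ρ ∪ τ' := Finset.eq_of_subset_of_card_le Finset.subset_union_left (by omega)
      have h4 : τ' ⊆ ρ := h3 ▸ Finset.subset_union_right
      exact hne (Finset.eq_of_subset_of_card_le h4 (by omega))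
  exact Finset.eq_of_subset_of_card_le hsub (by omega)

lemma choose_pred (c : ℕ) (hc : 1 ≤ c) : c.choose (c - 1) = c := by
  have h := Nat.choose_symm (show 1 ≤ c from hc)
  rw [h, Nat.choose_one_right]

lemma weight_K' (hX : X.IsWSC n) {c : ℕ} (hc : c ≤ n) {τ : Finset V} (hτ : τ ∈ X.K c) :
    X.m τ = ∑ σ ∈ (X.K (c + 1)).filter (fun σ => τ ⊆ σ), X.m σ := by
  have h := weight_K hX (mem_K.1 hτ).1 ((mem_K.1 hτ).2 ▸ hc)
  rwa [(mem_K.1 hτ).2] at h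

lemma card_K_filter (hX : X.IsWSC n) {c j : ℕ} {σ : Finset V} (hσ : σ ∈ X.K c) :
    ((X.K j).filter (fun τ => τ ⊆ σ)).card = c.choose j := by
  rw [K_filter_eq_powersetCard hX (mem_K.1 hσ).1, Finset.card_powersetCard, (mem_K.1 hσ).2]

/-- Unfolding `⟨M⁺ f, g⟩`. -/
lemma mup_inn (hX : X.IsWSC n) (c : ℕ) (f g : Finset V → ℝ) :
    X.inn c (X.Mup c f) g
      = (1 / ((c : ℝ) + 1)) * X.inn c f g + (1 / ((c : ℝ) + 1)) * Eg X c f g := by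
  have hc1 : ((c : ℝ) + 1) ≠ 0 := by positivity
  unfold inn Mup Eg
  rw [Finset.mul_sum, Finset.mul_sum, ← Finset.sum_add_distrib]
  apply Finset.sum_congr rfl
  intro τ hτ
  have hm : X.m τ ≠ 0 := (m_pos hX (mem_K.1 hτ).1).ne'
  rw [add_mul, mul_add, Finset.sum_mul, Finset.mul_sum, Finset.mul_sum]
  congr 1
  · ring
  · apply Finset.sum_congr rfl
    intro τ' _
    field_simp

/-- Pairs `(σ', σ)` with `σ = ρ ∪ σ'`. -/
lemma bijE (hX : X.IsWSC n) {c : ℕ} {ρ : Finset V} (hρ : ρ ∈ X.K c) (H : Finset V → ℝ) :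
    ∑ τ' ∈ (X.K c).filter (fun τ' => ρ ∪ τ' ∈ X.K (c + 1)), H τ'
      = ∑ σ ∈ (X.K (c + 1)).filter (fun σ => ρ ⊆ σ),
          ∑ τ' ∈ (X.K c).filter (fun τ' => τ' ⊆ σ ∧ τ' ≠ ρ), H τ' := by
  have hρc := (mem_K.1 hρ).2
  have key : ((X.K c).filter (fun τ' => ρ ∪ τ' ∈ X.K (c + 1)))
      = ((X.K (c + 1)).filter (fun σ => ρ ⊆ σ)).biUnion
          (fun σ => (X.K c).filter (fun τ' => τ' ⊆ σ ∧ τ' ≠ ρ)) := by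
    ext τ'
    simp only [Finset.mem_filter, Finset.mem_biUnion]
    constructor
    · rintro ⟨hτ', hu⟩
      have hne : τ' ≠ ρ := by
        intro h
        rw [h, Finset.union_self] at hu
        have := (mem_K.1 hu).2
        omega
      exact ⟨ρ ∪ τ', ⟨hu, Finset.subset_union_left⟩, hτ', Finset.subset_union_right, hne⟩
    · rintro ⟨σ, ⟨hσ, hρσ⟩, hτ', hsub, hne⟩
      have := union_eq_of_card hρc (mem_K.1 hτ').2 (mem_K.1 hσ).2 hρσ hsub hne
      exact ⟨hτ', this ▸ hσ⟩
  rw [key]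
  rw [Finset.sum_biUnion]
  intro σ1 h1 σ2 h2 hne
  apply Finset.disjoint_left.2
  intro τ' hm1 hm2
  simp only [Finset.mem_filter] at hm1 hm2
  rw [Finset.mem_coe, Finset.mem_filter] at h1 h2
  apply hne
  have e1 := union_eq_of_card hρc (mem_K.1 hm1.1).2 (mem_K.1 h1.1).2 h1.2 hm1.2.1 hm1.2.2
  have e2 := union_eq_of_card hρc (mem_K.1 hm2.1).2 (mem_K.1 h2.1).2 h2.2 hm2.2.1 hm2.2.2
  rw [← e1, ← e2]

lemma d_inn (hX : X.IsWSC n) {c : ℕ} (hc : c ≤ n) (f g : Finset V → ℝ) :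
    X.inn (c + 1) (X.d c f) (X.d c g) = X.inn c f g + Eg X c f g := by
  unfold inn d Eg
  have e1 : ∀ σ ∈ X.K (c + 1),
      X.m σ * ((∑ τ ∈ (X.K c).filter (fun τ => τ ⊆ σ), f τ) *
          (∑ τ ∈ (X.K c).filter (fun τ => τ ⊆ σ), g τ))
        = ∑ τ ∈ (X.K c).filter (fun τ => τ ⊆ σ), (X.m σ * (f τ * g τ)
            + ∑ τ' ∈ ((X.K c).filter (fun τ' => τ' ⊆ σ)).erase τ, X.m σ * (f τ' * g τ)) := by
    intro σ hσ
    have e2 : ∀ τ ∈ (X.K c).filter (fun τ => τ ⊆ σ),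
        X.m σ * (f τ * g τ)
            + ∑ τ' ∈ ((X.K c).filter (fun τ' => τ' ⊆ σ)).erase τ, X.m σ * (f τ' * g τ)
          = ∑ τ' ∈ (X.K c).filter (fun τ' => τ' ⊆ σ), X.m σ * (f τ' * g τ) := by
      intro τ hτ
      exact Finset.add_sum_erase _ (fun τ' => X.m σ * (f τ' * g τ)) hτ
    rw [Finset.sum_congr rfl e2, Finset.sum_comm, Finset.sum_mul_sum, Finset.mul_sum]
    apply Finset.sum_congr rfl
    intro τ' hh'
    rw [Finset.mul_sum]
  rw [Finset.sum_congr rfl e1]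
  have e3 : ∀ σ ∈ X.K (c + 1), ∑ τ ∈ (X.K c).filter (fun τ => τ ⊆ σ), (X.m σ * (f τ * g τ)
            + ∑ τ' ∈ ((X.K c).filter (fun τ' => τ' ⊆ σ)).erase τ, X.m σ * (f τ' * g τ))
      = (∑ τ ∈ (X.K c).filter (fun τ => τ ⊆ σ), X.m σ * (f τ * g τ))
        + ∑ τ ∈ (X.K c).filter (fun τ => τ ⊆ σ),
            ∑ τ' ∈ ((X.K c).filter (fun τ' => τ' ⊆ σ)).erase τ, X.m σ * (f τ' * g τ) := by
    intro σ _
    exact Finset.sum_add_distrib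
  rw [Finset.sum_congr rfl e3, Finset.sum_add_distrib]
  congr 1
  · rw [pswap]
    apply Finset.sum_congr rfl
    intro τ hτ
    rw [← Finset.sum_mul, ← weight_K' hX hc hτ]
  · rw [pswap]
    apply Finset.sum_congr rfl
    intro τ hτ
    have hb := bijE hX hτ (fun τ' => X.m (τ ∪ τ') * f τ' * g τ)
    rw [hb]
    apply Finset.sum_congr rfl
    intro σ hσ
    rw [Finset.mem_filter] at hσ
    have e4 : (X.K c).filter (fun τ' => τ' ⊆ σ ∧ τ' ≠ τ)
        = ((X.K c).filter (fun τ' => τ' ⊆ σ)).erase τ := by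
      rw [← Finset.filter_filter, Finset.filter_ne']
    rw [e4]
    apply Finset.sum_congr rfl
    intro τ' hτ'
    rw [Finset.mem_erase, Finset.mem_filter] at hτ'
    have e5 : τ ∪ τ' = σ := union_eq_of_card (mem_K.1 hτ).2 (mem_K.1 hτ'.2.1).2
      (mem_K.1 hσ.1).2 hσ.2 hτ'.2.2 hτ'.1
    rw [e5]
    ring

lemma mup_dd (hX : X.IsWSC n) {c : ℕ} (hc : c ≤ n) (f g : Finset V → ℝ) :
    X.inn c (X.Mup c f) g = (1 / ((c : ℝ) + 1)) * X.inn (c + 1) (X.d c f) (X.d c g) := by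
  rw [d_inn hX hc, mup_inn hX, mul_add]

lemma adj (hX : X.IsWSC n) (c : ℕ) (f g : Finset V → ℝ) :
    X.inn (c + 1) (X.d c f) g = X.inn c f (X.dStar c g) := by
  unfold inn d dStar
  have e1 : ∀ σ ∈ X.K (c + 1),
      X.m σ * ((∑ τ ∈ (X.K c).filter (fun τ => τ ⊆ σ), f τ) * g σ)
        = ∑ τ ∈ (X.K c).filter (fun τ => τ ⊆ σ), X.m σ * (f τ * g σ) := by
    intro σ _
    rw [Finset.sum_mul, Finset.mul_sum]
  rw [Finset.sum_congr rfl e1, pswap]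
  apply Finset.sum_congr rfl
  intro τ hτ
  have hm : X.m τ ≠ 0 := (m_pos hX (mem_K.1 hτ).1).ne'
  rw [Finset.mul_sum, Finset.mul_sum]
  apply Finset.sum_congr rfl
  intro σ _
  field_simp

lemma dStar_zero (hX : X.IsWSC n) {c : ℕ} {φ : Finset V → ℝ}
    (hφ : X.cochainZero (c + 1) φ) : X.cochainZero c (X.dStar c φ) := by
  unfold cochainZero dStar
  unfold cochainZero at hφ
  have e1 : ∀ τ ∈ X.K c,
      X.m τ * ∑ σ ∈ (X.K (c + 1)).filter (fun σ => τ ⊆ σ), X.m σ / X.m τ * φ σ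
        = ∑ σ ∈ (X.K (c + 1)).filter (fun σ => τ ⊆ σ), X.m σ * φ σ := by
    intro τ hτ
    have hm : X.m τ ≠ 0 := (m_pos hX (mem_K.1 hτ).1).ne'
    rw [Finset.mul_sum]
    apply Finset.sum_congr rfl
    intro σ _
    field_simp
  rw [Finset.sum_congr rfl e1, pswap]
  have e2 : ∀ σ ∈ X.K (c + 1),
      ∑ τ ∈ (X.K c).filter (fun τ => τ ⊆ σ), X.m σ * φ σ
        = ((c : ℝ) + 1) * (X.m σ * φ σ) := by
    intro σ hσ
    rw [Finset.sum_const, card_K_filter hX hσ]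
    have : (c + 1).choose c = c + 1 := by
      have := choose_pred (c + 1) (by omega)
      simpa using this
    rw [this, nsmul_eq_mul]
    push_cast
    ring
  rw [Finset.sum_congr rfl e2, ← Finset.mul_sum, hφ, mul_zero]

lemma mup_zero (hX : X.IsWSC n) {c : ℕ} (hc : c ≤ n) {φ : Finset V → ℝ}
    (hφ : X.cochainZero c φ) : X.cochainZero c (X.Mup c φ) := by
  unfold cochainZero Mup
  unfold cochainZero at hφ
  have e1 : ∀ τ ∈ X.K c,
      X.m τ * ((1 / ((c : ℝ) + 1)) * φ τ
          + ∑ τ' ∈ (X.K c).filter (fun τ' => τ ∪ τ' ∈ X.K (c + 1)),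
              X.m (τ ∪ τ') / (((c : ℝ) + 1) * X.m τ) * φ τ')
        = (1 / ((c : ℝ) + 1)) * (X.m τ * φ τ)
          + (1 / ((c : ℝ) + 1)) * ∑ τ' ∈ (X.K c).filter (fun τ' => τ ∪ τ' ∈ X.K (c + 1)),
              X.m (τ ∪ τ') * φ τ' := by
    intro τ hτ
    have hm : X.m τ ≠ 0 := (m_pos hX (mem_K.1 hτ).1).ne'
    have hc1 : ((c : ℝ) + 1) ≠ 0 := by positivity
    rw [mul_add, Finset.mul_sum, Finset.mul_sum]
    congr 1
    · ring
    · apply Finset.sum_congr rfl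
      intro τ' _
      field_simp
  rw [Finset.sum_congr rfl e1, Finset.sum_add_distrib, ← Finset.mul_sum, hφ, mul_zero,
    zero_add, ← Finset.mul_sum]
  have e2 : ∑ τ ∈ X.K c, ∑ τ' ∈ (X.K c).filter (fun τ' => τ ∪ τ' ∈ X.K (c + 1)),
      X.m (τ ∪ τ') * φ τ' = 0 := by
    rw [pswap]
    have e3 : ∀ τ' ∈ X.K c,
        ∑ τ ∈ (X.K c).filter (fun τ => τ ∪ τ' ∈ X.K (c + 1)), X.m (τ ∪ τ') * φ τ'
          = (c : ℝ) * (X.m τ' * φ τ') := by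
      intro τ' hτ'
      have e4 : (X.K c).filter (fun τ => τ ∪ τ' ∈ X.K (c + 1))
          = (X.K c).filter (fun τ => τ' ∪ τ ∈ X.K (c + 1)) := by
        apply Finset.filter_congr
        intro τ _
        rw [Finset.union_comm]
      have e5 : ∀ τ ∈ (X.K c).filter (fun τ => τ' ∪ τ ∈ X.K (c + 1)),
          X.m (τ ∪ τ') * φ τ' = X.m (τ' ∪ τ) * φ τ' := by
        intro τ _
        rw [Finset.union_comm]
      rw [e4, Finset.sum_congr rfl e5, bijE hX hτ' (fun τ => X.m (τ' ∪ τ) * φ τ')]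
      have e6 : ∀ σ ∈ (X.K (c + 1)).filter (fun σ => τ' ⊆ σ),
          ∑ τ ∈ (X.K c).filter (fun τ => τ ⊆ σ ∧ τ ≠ τ'), X.m (τ' ∪ τ) * φ τ'
            = (c : ℝ) * (X.m σ * φ τ') := by
        intro σ hσ
        rw [Finset.mem_filter] at hσ
        have e7 : ∀ τ ∈ (X.K c).filter (fun τ => τ ⊆ σ ∧ τ ≠ τ'),
            X.m (τ' ∪ τ) * φ τ' = X.m σ * φ τ' := by
          intro τ hτ
          rw [Finset.mem_filter] at hτ
          rw [union_eq_of_card (mem_K.1 hτ').2 (mem_K.1 hτ.1).2 (mem_K.1 hσ.1).2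
            hσ.2 hτ.2.1 hτ.2.2]
        rw [Finset.sum_congr rfl e7, Finset.sum_const]
        have e8 : (X.K c).filter (fun τ => τ ⊆ σ ∧ τ ≠ τ')
            = ((X.K c).filter (fun τ => τ ⊆ σ)).erase τ' := by
          rw [← Finset.filter_filter, Finset.filter_ne']
        rw [e8, Finset.card_erase_of_mem, card_K_filter hX hσ.1]
        · have : (c + 1).choose c = c + 1 := by
            have := choose_pred (c + 1) (by omega)
            simpa using this
          rw [this, nsmul_eq_mul]
          push_cast
          ring
        · rw [Finset.mem_filter]
          exact ⟨hτ', hσ.2⟩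
      rw [Finset.sum_congr rfl e6, ← Finset.mul_sum, ← Finset.sum_mul,
        ← weight_K' hX hc hτ']
    rw [Finset.sum_congr rfl e3, ← Finset.mul_sum, hφ, mul_zero]
  rw [e2, mul_zero]

lemma link_mem_faces {τ η : Finset V} (h : η ∈ (X.link τ).faces) :
    η ∈ X.faces ∧ η ∩ τ = ∅ ∧ τ ∪ η ∈ X.faces := by
  simpa [link] using h

lemma link_closed (hX : X.IsWSC n) {τ η η' : Finset V} (h : η ∈ (X.link τ).faces)
    (hsub : η' ⊆ η) : η' ∈ (X.link τ).faces := by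
  have h' := link_mem_faces h
  simp only [link, Finset.mem_filter]
  refine ⟨hX.2.1 h'.1 hsub, ?_, ?_⟩
  · rw [← Finset.subset_empty, ← h'.2.1]
    exact Finset.inter_subset_inter hsub Finset.Subset.rfl
  · exact hX.2.1 h'.2.2 (Finset.union_subset_union Finset.Subset.rfl hsub)

lemma union_sdiff_self' {τ η : Finset V} (h : η ∩ τ = ∅) : (τ ∪ η) \ τ = η := by
  ext a
  simp only [Finset.mem_sdiff, Finset.mem_union]
  constructor
  · rintro ⟨h1 | h1, h2⟩
    · exact absurd h1 h2
    · exact h1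
  · intro ha
    refine ⟨Or.inr ha, fun hat => ?_⟩
    have : a ∈ η ∩ τ := Finset.mem_inter.2 ⟨ha, hat⟩
    simp [h] at this

lemma disj_of_inter_eq_empty {τ η : Finset V} (h : η ∩ τ = ∅) : Disjoint τ η := by
  rw [Finset.disjoint_iff_inter_eq_empty, Finset.inter_comm]
  exact h

/-- Transferring a sum over the link to a sum over the complex. -/
lemma linksum (hX : X.IsWSC n) {τ ρ : Finset V} (hτ : τ ∈ X.faces)
    (hρ : ρ ∈ (X.link τ).faces) (j : ℕ) (F : Finset V → ℝ) :
    ∑ η ∈ ((X.link τ).K j).filter (fun η => ρ ⊆ η), F (τ ∪ η)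
      = ∑ σ ∈ (X.K (τ.card + j)).filter (fun σ => τ ∪ ρ ⊆ σ), F σ := by
  apply Finset.sum_nbij' (fun η => τ ∪ η) (fun σ => σ \ τ)
  · intro η hη
    rw [Finset.mem_filter] at hη ⊢
    obtain ⟨hηK, hρη⟩ := hη
    obtain ⟨hηf, hηc⟩ := mem_K.1 hηK
    obtain ⟨h1, h2, h3⟩ := link_mem_faces hηf
    refine ⟨mem_K.2 ⟨h3, ?_⟩, Finset.union_subset_union Finset.Subset.rfl hρη⟩
    rw [Finset.card_union_of_disjoint (disj_of_inter_eq_empty h2), hηc]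
  · intro σ hσ
    rw [Finset.mem_filter] at hσ ⊢
    obtain ⟨hσK, hρσ⟩ := hσ
    obtain ⟨hσf, hσc⟩ := mem_K.1 hσK
    have hτσ : τ ⊆ σ := Finset.subset_union_left.trans hρσ
    obtain ⟨hρf, hρd, _⟩ := link_mem_faces hρ
    constructor
    · rw [mem_K (X := X.link τ)]
      constructor
      · simp only [link, Finset.mem_filter]
        refine ⟨hX.2.1 hσf Finset.sdiff_subset, Finset.sdiff_inter_self _ _, ?_⟩
        rwa [Finset.union_sdiff_of_subset hτσ]
      · rw [Finset.card_sdiff_of_subset hτσ, hσc, Nat.add_sub_cancel_left]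
    · rw [Finset.subset_sdiff]
      exact ⟨Finset.subset_union_right.trans hρσ, disj_of_inter_eq_empty hρd |>.symm⟩
  · intro η hη
    rw [Finset.mem_filter] at hη
    obtain ⟨h1, h2, _⟩ := link_mem_faces (mem_K.1 hη.1).1
    exact union_sdiff_self' h2
  · intro σ hσ
    rw [Finset.mem_filter] at hσ
    exact Finset.union_sdiff_of_subset (Finset.subset_union_left.trans hσ.2)
  · intro η _
    rfl

lemma linksum0 (hX : X.IsWSC n) {τ : Finset V} (hτ : τ ∈ X.faces) (j : ℕ)
    (F : Finset V → ℝ) :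
    ∑ η ∈ (X.link τ).K j, F (τ ∪ η)
      = ∑ σ ∈ (X.K (τ.card + j)).filter (fun σ => τ ⊆ σ), F σ := by
  have hρ : (∅ : Finset V) ∈ (X.link τ).faces := by
    simp only [link, Finset.mem_filter]
    exact ⟨hX.1, Finset.empty_inter τ, by rwa [Finset.union_empty]⟩
  have h := linksum hX hτ hρ j F
  rw [Finset.filter_true_of_mem (fun η _ => Finset.empty_subset η)] at h
  rw [h]
  apply Finset.sum_congr _ (fun _ _ => rfl)
  apply Finset.filter_congr
  intro σ _
  rw [Finset.union_empty]

/-- Within the link: edges at a fixed vertex. -/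
lemma lbc (hX : X.IsWSC n) {τ η₁ : Finset V} (hη₁ : η₁ ∈ (X.link τ).K 1)
    (F : Finset V → ℝ) :
    ∑ w ∈ ((X.link τ).K 1).filter (fun w => η₁ ∪ w ∈ (X.link τ).K 2), F (η₁ ∪ w)
      = ∑ η₂ ∈ ((X.link τ).K 2).filter (fun η₂ => η₁ ⊆ η₂), F η₂ := by
  obtain ⟨hη₁f, hη₁c⟩ := mem_K.1 hη₁
  apply Finset.sum_nbij' (fun w => η₁ ∪ w) (fun η₂ => η₂ \ η₁)
  · intro w hw
    rw [Finset.mem_filter] at hw ⊢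
    exact ⟨hw.2, Finset.subset_union_left⟩
  · intro η₂ hη₂
    rw [Finset.mem_filter] at hη₂ ⊢
    obtain ⟨hη₂K, hsub⟩ := hη₂
    obtain ⟨hη₂f, hη₂c⟩ := mem_K.1 hη₂K
    have he : η₁ ∪ η₂ \ η₁ = η₂ := Finset.union_sdiff_of_subset hsub
    constructor
    · rw [mem_K (X := X.link τ)]
      refine ⟨link_closed hX hη₂f Finset.sdiff_subset, ?_⟩
      rw [Finset.card_sdiff_of_subset hsub, hη₂c, hη₁c]
    · rw [he]
      exact hη₂K
  · intro w hw
    rw [Finset.mem_filter] at hw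
    have hcu := (mem_K.1 hw.2).2
    have hwc := (mem_K.1 hw.1).2
    have hint : η₁ ∩ w = ∅ := by
      rw [← Finset.card_eq_zero]
      have := Finset.card_union_add_card_inter η₁ w
      omega
    have : Disjoint η₁ w := Finset.disjoint_iff_inter_eq_empty.2 hint
    rw [Finset.inter_comm] at hint
    exact union_sdiff_self' hint
  · intro η₂ hη₂
    rw [Finset.mem_filter] at hη₂
    exact Finset.union_sdiff_of_subset hη₂.2
  · intro w _
    rfl

lemma linkW1 (hX : X.IsWSC n) {c : ℕ} (hc : c + 1 ≤ n) {τ : Finset V} (hτ : τ ∈ X.K c)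
    {η₁ : Finset V} (hη₁ : η₁ ∈ (X.link τ).K 1) :
    ∑ w ∈ ((X.link τ).K 1).filter (fun w => η₁ ∪ w ∈ (X.link τ).K 2),
        (X.link τ).m (η₁ ∪ w) = (X.link τ).m η₁ := by
  have h1 := lbc hX hη₁ (fun η₂ => X.m (τ ∪ η₂))
  obtain ⟨hτf, hτc⟩ := mem_K.1 hτ
  have h2 := linksum hX hτf (mem_K.1 hη₁).1 2 X.m
  obtain ⟨hη₁f, hη₁d, hτη₁f⟩ := link_mem_faces (mem_K.1 hη₁).1
  have hτη₁K : τ ∪ η₁ ∈ X.K (c + 1) := by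
    rw [mem_K]
    refine ⟨hτη₁f, ?_⟩
    rw [Finset.card_union_of_disjoint (disj_of_inter_eq_empty hη₁d), hτc, (mem_K.1 hη₁).2]
  have h3 := weight_K' hX hc hτη₁K
  calc ∑ w ∈ ((X.link τ).K 1).filter (fun w => η₁ ∪ w ∈ (X.link τ).K 2),
        (X.link τ).m (η₁ ∪ w)
      = ∑ η₂ ∈ ((X.link τ).K 2).filter (fun η₂ => η₁ ⊆ η₂), X.m (τ ∪ η₂) := h1
    _ = ∑ σ ∈ (X.K (τ.card + 2)).filter (fun σ => τ ∪ η₁ ⊆ σ), X.m σ := h2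
    _ = (X.link τ).m η₁ := by
        rw [hτc, ← h3]
        rfl

lemma linkW0 (hX : X.IsWSC n) {c : ℕ} (hc : c ≤ n) {τ : Finset V} (hτ : τ ∈ X.K c) :
    ∑ η ∈ (X.link τ).K 1, (X.link τ).m η = X.m τ := by
  obtain ⟨hτf, hτc⟩ := mem_K.1 hτ
  have h := linksum0 hX hτf 1 X.m
  rw [hτc] at h
  calc ∑ η ∈ (X.link τ).K 1, (X.link τ).m η
      = ∑ σ ∈ (X.K (c + 1)).filter (fun σ => τ ⊆ σ), X.m σ := h
    _ = X.m τ := (weight_K' hX hc hτ).symm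

lemma m_pos_K (hX : X.IsWSC n) {c : ℕ} {σ : Finset V} (hσ : σ ∈ X.K c) : 0 < X.m σ :=
  m_pos hX (mem_K.1 hσ).1

lemma link_m_pos (hX : X.IsWSC n) {τ : Finset V} {c : ℕ} {η : Finset V}
    (hη : η ∈ (X.link τ).K c) : 0 < (X.link τ).m η :=
  m_pos hX (link_mem_faces (mem_K.1 hη).1).2.2

lemma qdiag (hX : X.IsWSC n) {c : ℕ} (hc : c + 1 ≤ n) {τ : Finset V} (hτ : τ ∈ X.K c)
    (g : Finset V → ℝ) :
    ∑ v ∈ (X.link τ).K 1, ∑ w ∈ ((X.link τ).K 1).filter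
        (fun w => v ∪ w ∈ (X.link τ).K 2), (X.link τ).m (v ∪ w) * g v
      = ∑ v ∈ (X.link τ).K 1, (X.link τ).m v * g v := by
  apply Finset.sum_congr rfl
  intro v hv
  rw [← Finset.sum_mul, linkW1 hX hc hτ hv]

lemma qswap (hX : X.IsWSC n) {c : ℕ} (hc : c + 1 ≤ n) {τ : Finset V} (hτ : τ ∈ X.K c)
    (g : Finset V → ℝ) :
    ∑ v ∈ (X.link τ).K 1, ∑ w ∈ ((X.link τ).K 1).filter
        (fun w => v ∪ w ∈ (X.link τ).K 2), (X.link τ).m (v ∪ w) * g w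
      = ∑ v ∈ (X.link τ).K 1, (X.link τ).m v * g v := by
  rw [pswap]
  apply Finset.sum_congr rfl
  intro w hw
  have e1 : ((X.link τ).K 1).filter (fun v => v ∪ w ∈ (X.link τ).K 2)
      = ((X.link τ).K 1).filter (fun v => w ∪ v ∈ (X.link τ).K 2) := by
    apply Finset.filter_congr
    intro v _
    rw [Finset.union_comm]
  have e2 : ∀ v ∈ ((X.link τ).K 1).filter (fun v => w ∪ v ∈ (X.link τ).K 2),
      (X.link τ).m (v ∪ w) * g w = (X.link τ).m (w ∪ v) * g w := by
    intro v _
    rw [Finset.union_comm]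
  rw [e1, Finset.sum_congr rfl e2, ← Finset.sum_mul, linkW1 hX hc hτ hw]

lemma Q_le (hX : X.IsWSC n) {c : ℕ} (hc : c + 1 ≤ n) {τ : Finset V} (hτ : τ ∈ X.K c)
    (f : Finset V → ℝ) : Qf (X.link τ) f ≤ (X.link τ).normSq 1 f := by
  have step : Qf (X.link τ) f
      ≤ ∑ v ∈ (X.link τ).K 1, ∑ w ∈ ((X.link τ).K 1).filter
          (fun w => v ∪ w ∈ (X.link τ).K 2),
            ((X.link τ).m (v ∪ w) * (f v * f v) / 2
              + (X.link τ).m (v ∪ w) * (f w * f w) / 2) := by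
    apply Finset.sum_le_sum
    intro v hv
    apply Finset.sum_le_sum
    intro w hw
    have hm : 0 < (X.link τ).m (v ∪ w) := link_m_pos hX (Finset.mem_filter.1 hw).2
    nlinarith [sq_nonneg (f v - f w)]
  have e1 : ∑ v ∈ (X.link τ).K 1, ∑ w ∈ ((X.link τ).K 1).filter
          (fun w => v ∪ w ∈ (X.link τ).K 2),
            ((X.link τ).m (v ∪ w) * (f v * f v) / 2
              + (X.link τ).m (v ∪ w) * (f w * f w) / 2)
      = (∑ v ∈ (X.link τ).K 1, ∑ w ∈ ((X.link τ).K 1).filter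
          (fun w => v ∪ w ∈ (X.link τ).K 2), (X.link τ).m (v ∪ w) * (f v * f v)) / 2
        + (∑ v ∈ (X.link τ).K 1, ∑ w ∈ ((X.link τ).K 1).filter
          (fun w => v ∪ w ∈ (X.link τ).K 2), (X.link τ).m (v ∪ w) * (f w * f w)) / 2 := by
    simp only [Finset.sum_add_distrib, Finset.sum_div]
  rw [e1, qdiag hX hc hτ (fun v => f v * f v), qswap hX hc hτ (fun v => f v * f v)] at step
  calc Qf (X.link τ) f ≤ _ := step
    _ = (X.link τ).normSq 1 f := by unfold normSq inn; ring

lemma Q_eq_inn (hX : X.IsWSC n) {τ : Finset V} (hτ : τ ∈ X.faces) (f : Finset V → ℝ) :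
    (X.link τ).inn 1 ((X.link τ).Mup' 1 f) f = Qf (X.link τ) f := by
  unfold inn Qf
  apply Finset.sum_congr rfl
  intro v hv
  have hm : (X.link τ).m v ≠ 0 := (link_m_pos hX hv).ne'
  have e1 : (X.link τ).Mup' 1 f v
      = ∑ w ∈ ((X.link τ).K 1).filter (fun w => v ∪ w ∈ (X.link τ).K 2),
          ((X.link τ).m (v ∪ w) / (X.link τ).m v) * f w := by
    unfold Mup' Mup
    push_cast
    rw [mul_add, Finset.mul_sum]
    have e2 : ∀ w ∈ ((X.link τ).K 1).filter (fun w => v ∪ w ∈ (X.link τ).K 2),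
        ((1 : ℝ) + 1) / 1 * ((X.link τ).m (v ∪ w) / (((1 : ℝ) + 1) * (X.link τ).m v) * f w)
          = ((X.link τ).m (v ∪ w) / (X.link τ).m v) * f w := by
      intro w _
      field_simp
    rw [Finset.sum_congr rfl e2]
    ring
  rw [e1, Finset.sum_mul, Finset.mul_sum]
  apply Finset.sum_congr rfl
  intro w _
  field_simp

lemma link_normSq_nonneg (hX : X.IsWSC n) (τ : Finset V) (f : Finset V → ℝ) :
    0 ≤ (X.link τ).normSq 1 f :=
  normSq_nonneg (fun _ hσ => link_m_pos hX hσ) f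

lemma secondEig_le_one (hX : X.IsWSC n) {c : ℕ} (hc : c + 1 ≤ n) {τ : Finset V}
    (hτ : τ ∈ X.K c) : (X.link τ).secondEig ≤ 1 := by
  apply Real.sSup_le _ zero_le_one
  rintro r ⟨ψ, hψz, hψ0, rfl⟩
  have hpos : 0 < (X.link τ).normSq 1 ψ :=
    lt_of_le_of_ne (link_normSq_nonneg hX τ ψ) (Ne.symm hψz)
  rw [Q_eq_inn hX (mem_K.1 hτ).1]
  exact div_le_one_of_le₀ (Q_le hX hc hτ ψ) hpos.le

lemma Q_spectral (hX : X.IsWSC n) {lam : ℝ} (h0 : 0 ≤ lam)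
    (hexp : X.OneSided n lam) {c : ℕ} (hc : c + 1 ≤ n) {τ : Finset V} (hτ : τ ∈ X.K c)
    {f : Finset V → ℝ} (hf : (∑ v ∈ (X.link τ).K 1, (X.link τ).m v * f v) = 0) :
    Qf (X.link τ) f ≤ lam * (X.link τ).normSq 1 f := by
  by_cases hz : (X.link τ).normSq 1 f = 0
  · have hf0 : ∀ v ∈ (X.link τ).K 1, f v = 0 :=
      fun v hv => eq_zero_of_normSq_eq_zero (fun _ hσ => link_m_pos hX hσ) hz hv
    have hQ0 : Qf (X.link τ) f = 0 := by
      apply Finset.sum_eq_zero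
      intro v hv
      apply Finset.sum_eq_zero
      intro w hw
      rw [hf0 v hv, mul_zero]
    rw [hQ0, hz, mul_zero]
  · have hpos : 0 < (X.link τ).normSq 1 f :=
      lt_of_le_of_ne (link_normSq_nonneg hX τ f) (Ne.symm hz)
    have hmem : ((X.link τ).inn 1 ((X.link τ).Mup' 1 f) f) / (X.link τ).normSq 1 f
        ∈ {r : ℝ | ∃ ψ : Finset V → ℝ, (X.link τ).normSq 1 ψ ≠ 0 ∧
            (∑ v ∈ (X.link τ).K 1, (X.link τ).m v * ψ v) = 0 ∧
            r = (X.link τ).inn 1 ((X.link τ).Mup' 1 ψ) ψ / (X.link τ).normSq 1 ψ} :=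
      ⟨f, hz, hf, rfl⟩
    have hbdd : BddAbove {r : ℝ | ∃ ψ : Finset V → ℝ, (X.link τ).normSq 1 ψ ≠ 0 ∧
        (∑ v ∈ (X.link τ).K 1, (X.link τ).m v * ψ v) = 0 ∧
        r = (X.link τ).inn 1 ((X.link τ).Mup' 1 ψ) ψ / (X.link τ).normSq 1 ψ} := by
      refine ⟨1, ?_⟩
      rintro r ⟨ψ, hψz, hψ0, rfl⟩
      have hp : 0 < (X.link τ).normSq 1 ψ :=
        lt_of_le_of_ne (link_normSq_nonneg hX τ ψ) (Ne.symm hψz)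
      rw [Q_eq_inn hX (mem_K.1 hτ).1]
      exact div_le_one_of_le₀ (Q_le hX hc hτ ψ) hp.le
    have h1 : ((X.link τ).inn 1 ((X.link τ).Mup' 1 f) f) / (X.link τ).normSq 1 f
        ≤ (X.link τ).secondEig := le_csSup hbdd hmem
    have h2 : (X.link τ).secondEig ≤ X.mu c := by
      apply le_csSup
      · refine ⟨1, ?_⟩
        rintro r ⟨τ', hτ', rfl⟩
        exact secondEig_le_one hX hc hτ'
      · exact ⟨τ, hτ, rfl⟩
    have h3 : X.mu c ≤ lam := hexp c (by omega)
    have h4 : ((X.link τ).inn 1 ((X.link τ).Mup' 1 f) f) / (X.link τ).normSq 1 f ≤ lam :=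
      h1.trans (h2.trans h3)
    have h5 := mul_le_mul_of_nonneg_right h4 hpos.le
    rw [div_mul_cancel₀ _ hz, Q_eq_inn hX (mem_K.1 hτ).1] at h5
    exact h5

lemma E_tau_bound (hX : X.IsWSC n) {lam : ℝ} (h0 : 0 ≤ lam)
    (hexp : X.OneSided n lam) {c : ℕ} (hc : c + 1 ≤ n) {τ : Finset V} (hτ : τ ∈ X.K c)
    (φ : Finset V → ℝ) :
    Qf (X.link τ) (localize φ τ)
      ≤ lam * (X.link τ).normSq 1 (localize φ τ) + (X.dStar c φ τ) ^ 2 * X.m τ := by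
  have hcn : c ≤ n := by omega
  obtain ⟨hτf, hτc⟩ := mem_K.1 hτ
  have hmτ : 0 < X.m τ := m_pos hX hτf
  set a := X.dStar c φ τ with ha
  set ψ : Finset V → ℝ := fun η => localize φ τ η - a with hψ
  have hW0 := linkW0 hX hcn hτ
  have hsum : ∑ v ∈ (X.link τ).K 1, (X.link τ).m v * localize φ τ v = a * X.m τ := by
    have h1 := linksum0 hX hτf 1 (fun σ => X.m σ * φ σ)
    rw [hτc] at h1
    have h2 : ∑ v ∈ (X.link τ).K 1, (X.link τ).m v * localize φ τ v
        = ∑ v ∈ (X.link τ).K 1, (fun σ => X.m σ * φ σ) (τ ∪ v) :=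
      Finset.sum_congr rfl (fun v _ => rfl)
    rw [h2, h1, ha]
    unfold dStar
    rw [Finset.sum_mul]
    apply Finset.sum_congr rfl
    intro σ _
    field_simp
  have hψ0 : ∑ v ∈ (X.link τ).K 1, (X.link τ).m v * ψ v = 0 := by
    have : ∀ v ∈ (X.link τ).K 1, (X.link τ).m v * ψ v
        = (X.link τ).m v * localize φ τ v - (X.link τ).m v * a := by
      intro v _
      simp only [hψ]
      ring
    rw [Finset.sum_congr rfl this, Finset.sum_sub_distrib, hsum, ← Finset.sum_mul, hW0]
    ring
  have T2 : ∑ v ∈ (X.link τ).K 1, ∑ w ∈ ((X.link τ).K 1).filter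
      (fun w => v ∪ w ∈ (X.link τ).K 2), (X.link τ).m (v ∪ w) * ψ v = 0 := by
    rw [qdiag hX hc hτ ψ, hψ0]
  have T3 : ∑ v ∈ (X.link τ).K 1, ∑ w ∈ ((X.link τ).K 1).filter
      (fun w => v ∪ w ∈ (X.link τ).K 2), (X.link τ).m (v ∪ w) * ψ w = 0 := by
    rw [qswap hX hc hτ ψ, hψ0]
  have T4 : ∑ v ∈ (X.link τ).K 1, ∑ w ∈ ((X.link τ).K 1).filter
      (fun w => v ∪ w ∈ (X.link τ).K 2), (X.link τ).m (v ∪ w) = X.m τ := by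
    have e : ∀ v ∈ (X.link τ).K 1, ∑ w ∈ ((X.link τ).K 1).filter
        (fun w => v ∪ w ∈ (X.link τ).K 2), (X.link τ).m (v ∪ w)
        = ∑ w ∈ ((X.link τ).K 1).filter
        (fun w => v ∪ w ∈ (X.link τ).K 2), (X.link τ).m (v ∪ w) * (fun _ => (1:ℝ)) v := by
      intro v _
      simp
    rw [Finset.sum_congr rfl e, qdiag hX hc hτ (fun _ => (1:ℝ))]
    simp only [mul_one]
    exact hW0
  have hQ : Qf (X.link τ) (localize φ τ) = Qf (X.link τ) ψ + a ^ 2 * X.m τ := by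
    unfold Qf
    have e : ∀ v ∈ (X.link τ).K 1, ∀ w ∈ ((X.link τ).K 1).filter
        (fun w => v ∪ w ∈ (X.link τ).K 2),
        (X.link τ).m (v ∪ w) * localize φ τ w * localize φ τ v
          = (X.link τ).m (v ∪ w) * ψ w * ψ v + a * ((X.link τ).m (v ∪ w) * ψ v)
            + a * ((X.link τ).m (v ∪ w) * ψ w) + a * (a * (X.link τ).m (v ∪ w)) := by
      intro v _ w _
      have h1 : localize φ τ w = ψ w + a := by simp [hψ]
      have h2 : localize φ τ v = ψ v + a := by simp [hψ]
      rw [h1, h2]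
      ring
    calc ∑ v ∈ (X.link τ).K 1, ∑ w ∈ ((X.link τ).K 1).filter
          (fun w => v ∪ w ∈ (X.link τ).K 2),
            (X.link τ).m (v ∪ w) * localize φ τ w * localize φ τ v
        = ∑ v ∈ (X.link τ).K 1, ∑ w ∈ ((X.link τ).K 1).filter
          (fun w => v ∪ w ∈ (X.link τ).K 2),
            ((X.link τ).m (v ∪ w) * ψ w * ψ v + a * ((X.link τ).m (v ∪ w) * ψ v)
            + a * ((X.link τ).m (v ∪ w) * ψ w) + a * (a * (X.link τ).m (v ∪ w))) := by
          apply Finset.sum_congr rfl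
          intro v hv
          exact Finset.sum_congr rfl (e v hv)
      _ = (∑ v ∈ (X.link τ).K 1, ∑ w ∈ ((X.link τ).K 1).filter
          (fun w => v ∪ w ∈ (X.link τ).K 2), (X.link τ).m (v ∪ w) * ψ w * ψ v)
          + a * (∑ v ∈ (X.link τ).K 1, ∑ w ∈ ((X.link τ).K 1).filter
          (fun w => v ∪ w ∈ (X.link τ).K 2), (X.link τ).m (v ∪ w) * ψ v)
          + a * (∑ v ∈ (X.link τ).K 1, ∑ w ∈ ((X.link τ).K 1).filter
          (fun w => v ∪ w ∈ (X.link τ).K 2), (X.link τ).m (v ∪ w) * ψ w)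
          + a * (a * (∑ v ∈ (X.link τ).K 1, ∑ w ∈ ((X.link τ).K 1).filter
          (fun w => v ∪ w ∈ (X.link τ).K 2), (X.link τ).m (v ∪ w))) := by
          simp only [Finset.sum_add_distrib, ← Finset.mul_sum]
      _ = Qf (X.link τ) ψ + a ^ 2 * X.m τ := by
          rw [T2, T3, T4]
          unfold Qf
          ring
  have hnormψ : (X.link τ).normSq 1 ψ
      = (X.link τ).normSq 1 (localize φ τ) - a ^ 2 * X.m τ := by
    unfold normSq inn
    have e : ∀ v ∈ (X.link τ).K 1, (X.link τ).m v * (ψ v * ψ v)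
        = (X.link τ).m v * (localize φ τ v * localize φ τ v)
          - (2 * a) * ((X.link τ).m v * localize φ τ v) + (a * a) * (X.link τ).m v := by
      intro v _
      simp only [hψ]
      ring
    rw [Finset.sum_congr rfl e]
    simp only [Finset.sum_add_distrib, Finset.sum_sub_distrib, ← Finset.mul_sum]
    rw [hsum, hW0]
    ring
  have hspec := Q_spectral hX h0 hexp hc hτ hψ0
  rw [hQ, hnormψ] at *
  have ha2 : 0 ≤ a ^ 2 * X.m τ := by positivity
  nlinarith [hspec]

lemma locnorm (hX : X.IsWSC n) {c : ℕ} (hc : 1 ≤ c) (φ : Finset V → ℝ) :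
    ∑ τ ∈ X.K (c - 1), (X.link τ).normSq 1 (localize φ τ) = (c : ℝ) * X.normSq c φ := by
  have e1 : ∀ τ ∈ X.K (c - 1), (X.link τ).normSq 1 (localize φ τ)
      = ∑ σ ∈ (X.K c).filter (fun σ => τ ⊆ σ), X.m σ * (φ σ * φ σ) := by
    intro τ hτ
    obtain ⟨hτf, hτc⟩ := mem_K.1 hτ
    have h1 := linksum0 hX hτf 1 (fun σ => X.m σ * (φ σ * φ σ))
    rw [hτc] at h1
    have hc' : c - 1 + 1 = c := by omega
    rw [hc'] at h1
    exact h1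
  rw [Finset.sum_congr rfl e1, pswap]
  have e2 : ∀ σ ∈ X.K c, ∑ τ ∈ (X.K (c - 1)).filter (fun τ => τ ⊆ σ),
      X.m σ * (φ σ * φ σ) = (c : ℝ) * (X.m σ * (φ σ * φ σ)) := by
    intro σ hσ
    rw [Finset.sum_const, card_K_filter hX hσ, choose_pred c hc, nsmul_eq_mul]
  rw [Finset.sum_congr rfl e2, ← Finset.mul_sum]
  rfl

lemma recover_union {τ σ σ'' : Finset V} (h1 : τ ⊆ σ) (h2 : σ ⊆ σ'') :
    σ ∪ σ'' \ (σ \ τ) = σ'' := by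
  ext x
  simp only [Finset.mem_union, Finset.mem_sdiff]
  constructor
  · rintro (h | ⟨h, _⟩)
    · exact h2 h
    · exact h
  · intro hx
    by_cases hσx : x ∈ σ
    · exact Or.inl hσx
    · exact Or.inr ⟨hx, fun hc => hσx hc.1⟩

lemma recover_inter {τ σ σ'' : Finset V} (h1 : τ ⊆ σ) (h2 : σ ⊆ σ'') :
    σ ∩ (σ'' \ (σ \ τ)) = τ := by
  ext x
  simp only [Finset.mem_inter, Finset.mem_sdiff]
  constructor
  · rintro ⟨hxσ, _, hns⟩
    by_contra hxτ
    exact hns ⟨hxσ, hxτ⟩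
  · intro hxτ
    exact ⟨h1 hxτ, h2 (h1 hxτ), fun hc => hc.2 hxτ⟩

lemma recover_sdiff {σ σ' : Finset V} : (σ ∪ σ') \ (σ \ (σ ∩ σ')) = σ' := by
  ext x
  simp only [Finset.mem_sdiff, Finset.mem_union, Finset.mem_inter]
  tauto

lemma Edecomp (hX : X.IsWSC n) {c : ℕ} (hc : 1 ≤ c) (φ : Finset V → ℝ) :
    ∑ τ ∈ X.K (c - 1), Qf (X.link τ) (localize φ τ) = Eg X c φ φ := by
  have hcc : c - 1 + 1 = c := by omega
  have stepA : ∀ τ ∈ X.K (c - 1), Qf (X.link τ) (localize φ τ)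
      = ∑ σ ∈ (X.K c).filter (fun σ => τ ⊆ σ),
          ∑ σ'' ∈ (X.K (c + 1)).filter (fun σ'' => σ ⊆ σ''),
            X.m σ'' * φ (σ'' \ (σ \ τ)) * φ σ := by
    intro τ hτ
    obtain ⟨hτf, hτc⟩ := mem_K.1 hτ
    have inner : ∀ v ∈ (X.link τ).K 1,
        ∑ w ∈ ((X.link τ).K 1).filter (fun w => v ∪ w ∈ (X.link τ).K 2),
            (X.link τ).m (v ∪ w) * localize φ τ w * localize φ τ v
          = ∑ σ'' ∈ (X.K (c + 1)).filter (fun σ'' => τ ∪ v ⊆ σ''),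
              X.m σ'' * φ (σ'' \ v) * φ (τ ∪ v) := by
      intro v hv
      obtain ⟨hvf', hvc⟩ := mem_K.1 hv
      obtain ⟨hvf, hvd, hτvf⟩ := link_mem_faces hvf'
      have e1 : ∀ w ∈ ((X.link τ).K 1).filter (fun w => v ∪ w ∈ (X.link τ).K 2),
          (X.link τ).m (v ∪ w) * localize φ τ w * localize φ τ v
            = (fun η₂ => X.m (τ ∪ η₂) * φ ((τ ∪ η₂) \ v) * φ (τ ∪ v)) (v ∪ w) := by
        intro w hw
        rw [Finset.mem_filter] at hw
        have hwc := (mem_K.1 hw.1).2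
        have hcu := (mem_K.1 hw.2).2
        have hint : v ∩ w = ∅ := by
          rw [← Finset.card_eq_zero]
          have := Finset.card_union_add_card_inter v w
          omega
        have hvw : (v ∪ w) \ v = w := by
          rw [Finset.inter_comm] at hint
          exact union_sdiff_self' hint
        have hτd : τ \ v = τ :=
          Finset.sdiff_eq_self_of_disjoint (disj_of_inter_eq_empty hvd)
        have hτv : (τ ∪ (v ∪ w)) \ v = τ ∪ w := by
          rw [Finset.union_sdiff_distrib, hvw, hτd]
        simp only [hτv]
        rfl
      have e2 := lbc hX hv (fun η₂ => X.m (τ ∪ η₂) * φ ((τ ∪ η₂) \ v) * φ (τ ∪ v))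
      have e3 := linksum hX hτf hvf' 2 (fun σ => X.m σ * φ (σ \ v) * φ (τ ∪ v))
      have hτc2 : τ.card + 2 = c + 1 := by omega
      rw [hτc2] at e3
      calc ∑ w ∈ ((X.link τ).K 1).filter (fun w => v ∪ w ∈ (X.link τ).K 2),
            (X.link τ).m (v ∪ w) * localize φ τ w * localize φ τ v
          = ∑ w ∈ ((X.link τ).K 1).filter (fun w => v ∪ w ∈ (X.link τ).K 2),
              (fun η₂ => X.m (τ ∪ η₂) * φ ((τ ∪ η₂) \ v) * φ (τ ∪ v)) (v ∪ w) :=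
            Finset.sum_congr rfl e1
        _ = ∑ η₂ ∈ ((X.link τ).K 2).filter (fun η₂ => v ⊆ η₂),
              (fun η₂ => X.m (τ ∪ η₂) * φ ((τ ∪ η₂) \ v) * φ (τ ∪ v)) η₂ := e2
        _ = ∑ σ'' ∈ (X.K (c + 1)).filter (fun σ'' => τ ∪ v ⊆ σ''),
              X.m σ'' * φ (σ'' \ v) * φ (τ ∪ v) := e3
    have outer : ∀ v ∈ (X.link τ).K 1,
        ∑ σ'' ∈ (X.K (c + 1)).filter (fun σ'' => τ ∪ v ⊆ σ''),
            X.m σ'' * φ (σ'' \ v) * φ (τ ∪ v)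
          = (fun σ => ∑ σ'' ∈ (X.K (c + 1)).filter (fun σ'' => σ ⊆ σ''),
              X.m σ'' * φ (σ'' \ (σ \ τ)) * φ σ) (τ ∪ v) := by
      intro v hv
      obtain ⟨hvf', hvc⟩ := mem_K.1 hv
      obtain ⟨hvf, hvd, hτvf⟩ := link_mem_faces hvf'
      have hsd : (τ ∪ v) \ τ = v := union_sdiff_self' hvd
      simp only [hsd]
    have e4 := linksum0 hX hτf 1 (fun σ => ∑ σ'' ∈ (X.K (c + 1)).filter
        (fun σ'' => σ ⊆ σ''), X.m σ'' * φ (σ'' \ (σ \ τ)) * φ σ)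
    rw [hτc, hcc] at e4
    calc Qf (X.link τ) (localize φ τ)
        = ∑ v ∈ (X.link τ).K 1, (fun σ => ∑ σ'' ∈ (X.K (c + 1)).filter
            (fun σ'' => σ ⊆ σ''), X.m σ'' * φ (σ'' \ (σ \ τ)) * φ σ) (τ ∪ v) := by
          unfold Qf
          exact Finset.sum_congr rfl (fun v hv => (inner v hv).trans (outer v hv))
      _ = ∑ σ ∈ (X.K c).filter (fun σ => τ ⊆ σ),
            ∑ σ'' ∈ (X.K (c + 1)).filter (fun σ'' => σ ⊆ σ''),
              X.m σ'' * φ (σ'' \ (σ \ τ)) * φ σ := e4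
  rw [Finset.sum_congr rfl stepA, pswap]
  unfold Eg
  apply Finset.sum_congr rfl
  intro σ hσ
  obtain ⟨hσf, hσc⟩ := mem_K.1 hσ
  rw [← Finset.sum_product']
  apply Finset.sum_nbij' (fun p => p.2 \ (σ \ p.1)) (fun σ' => (σ ∩ σ', σ ∪ σ'))
  · rintro ⟨τ, σ''⟩ hp
    rw [Finset.mem_product] at hp
    obtain ⟨hp1, hp2⟩ := hp
    rw [Finset.mem_filter] at hp1 hp2 ⊢
    obtain ⟨hτK, hτσ⟩ := hp1
    obtain ⟨hσK'', hσσ''⟩ := hp2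
    obtain ⟨hτf, hτc⟩ := mem_K.1 hτK
    obtain ⟨hσf'', hσc''⟩ := mem_K.1 hσK''
    have hu : σ ∪ σ'' \ (σ \ τ) = σ'' := recover_union hτσ hσσ''
    have hsub : σ \ τ ⊆ σ'' := Finset.sdiff_subset.trans hσσ''
    constructor
    · rw [mem_K]
      refine ⟨hX.2.1 hσf'' Finset.sdiff_subset, ?_⟩
      rw [Finset.card_sdiff_of_subset hsub, Finset.card_sdiff_of_subset hτσ, hσc, hσc'', hτc]
      omega
    · rw [hu]
      exact hσK''
  · intro σ' hσ'
    rw [Finset.mem_filter] at hσ'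
    obtain ⟨hσ'K, hσ'u⟩ := hσ'
    obtain ⟨hσ'f, hσ'c⟩ := mem_K.1 hσ'K
    have hcard := Finset.card_union_add_card_inter σ σ'
    have hucard := (mem_K.1 hσ'u).2
    rw [Finset.mem_product]
    dsimp only
    constructor
    · rw [Finset.mem_filter, mem_K]
      refine ⟨⟨hX.2.1 hσf Finset.inter_subset_left, ?_⟩, Finset.inter_subset_left⟩
      omega
    · rw [Finset.mem_filter]
      exact ⟨hσ'u, Finset.subset_union_left⟩
  · rintro ⟨τ, σ''⟩ hp
    rw [Finset.mem_product] at hp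
    obtain ⟨hp1, hp2⟩ := hp
    rw [Finset.mem_filter] at hp1 hp2
    have hτσ := hp1.2
    have hσσ'' := hp2.2
    have : σ ∩ (σ'' \ (σ \ τ)) = τ := recover_inter hτσ hσσ''
    have hu : σ ∪ σ'' \ (σ \ τ) = σ'' := recover_union hτσ hσσ''
    simp only [this, hu]
  · intro σ' hσ'
    simp only
    exact recover_sdiff
  · rintro ⟨τ, σ''⟩ hp
    rw [Finset.mem_product] at hp
    obtain ⟨hp1, hp2⟩ := hp
    rw [Finset.mem_filter] at hp1 hp2
    have hu : σ ∪ σ'' \ (σ \ τ) = σ'' := recover_union hp1.2 hp2.2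
    simp only [hu]

set_option maxHeartbeats 1000000 in
lemma K_zero (hX : X.IsWSC n) : X.K 0 = {∅} := by
  ext σ
  simp only [mem_K, Finset.mem_singleton]
  constructor
  · rintro ⟨_, hc⟩
    exact Finset.card_eq_zero.1 hc
  · rintro rfl
    exact ⟨hX.1, Finset.card_empty⟩

set_option maxHeartbeats 2000000 in
lemma main_induction (hX : X.IsWSC n) {lam : ℝ} (h0 : 0 ≤ lam)
    (hexp : X.OneSided n lam) :
    ∀ k : ℕ, k < n → ∀ φ : Finset V → ℝ, X.cochainZero (k + 1) φ →
      X.inn (k + 1) (X.Mup (k + 1) φ) φ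
          ≤ (((k : ℝ) + 1) / ((k : ℝ) + 2) + ((k : ℝ) + 1) * lam) * X.normSq (k + 1) φ ∧
      X.normSq (k + 1) (X.Mup (k + 1) φ)
          ≤ (((k : ℝ) + 1) / ((k : ℝ) + 2) + ((k : ℝ) + 1) * lam) ^ 2
              * X.normSq (k + 1) φ := by
  intro k
  induction k using Nat.strong_induction_on with
  | _ k IH =>
  intro hkn
  set β : ℝ := ((k : ℝ) + 1) / ((k : ℝ) + 2) + ((k : ℝ) + 1) * lam with hβdef
  have hβ0 : 0 ≤ β := by positivity
  have hknn : k + 1 ≤ n := hkn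
  have hXnn : ∀ c : ℕ, ∀ f : Finset V → ℝ, 0 ≤ X.normSq c f :=
    fun c f => normSq_nonneg (fun _ hσ => m_pos_K hX hσ) f
  -- Rayleigh bound, for an arbitrary φ in C_0
  have hray : ∀ φ : Finset V → ℝ, X.cochainZero (k + 1) φ →
      X.inn (k + 1) (X.Mup (k + 1) φ) φ ≤ β * X.normSq (k + 1) φ := by
    intro φ hφ
    set ψ : Finset V → ℝ := X.dStar k φ with hψdef
    have hψ0 : X.cochainZero k ψ := dStar_zero hX hφ
    set S : ℝ := X.normSq k ψ with hSdef
    have hSnn : 0 ≤ S := hXnn k ψ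
    have hNφ : 0 ≤ X.normSq (k + 1) φ := hXnn (k + 1) φ
    -- the key bound on S
    have hS : S ≤ ((k : ℝ) + (k : ℝ) * ((k : ℝ) + 1) * lam) * X.normSq (k + 1) φ := by
      rcases Nat.eq_zero_or_pos k with hk0 | hkpos
      · subst hk0
        have hz : ψ ∅ = 0 := by
          have h1 : ∑ σ ∈ X.K 0, X.m σ * ψ σ = 0 := hψ0
          rw [K_zero hX, Finset.sum_singleton] at h1
          have hm : 0 < X.m ∅ := m_pos hX hX.1
          rcases mul_eq_zero.1 h1 with h | h
          · exact absurd h hm.ne'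
          · exact h
        have : S = 0 := by
          rw [hSdef]
          unfold normSq inn
          rw [K_zero hX, Finset.sum_singleton, hz]
          ring
        rw [this]
        push_cast
        nlinarith [hNφ]
      · have hk1 : k - 1 + 1 = k := by omega
        have hkcast : ((k - 1 : ℕ) : ℝ) = (k : ℝ) - 1 := by
          push_cast [Nat.cast_sub hkpos]
          ring
        have hIH := IH (k - 1) (by omega) (by omega) ψ (by rw [hk1]; exact hψ0)
        rw [hk1, hkcast] at hIH
        set β' : ℝ := ((k : ℝ) - 1 + 1) / ((k : ℝ) - 1 + 2) + ((k : ℝ) - 1 + 1) * lam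
          with hβ'def
        have hβ'0 : 0 ≤ β' := by
          have hk1' : (1 : ℝ) ≤ (k : ℝ) := by exact_mod_cast hkpos
          rw [hβ'def]
          have h1 : (0:ℝ) ≤ ((k : ℝ) - 1 + 1) / ((k : ℝ) - 1 + 2) := by
            apply div_nonneg <;> linarith
          nlinarith
        have hIH2 := hIH.2
        -- A := ⟨Mup_k ψ, ψ⟩
        set A : ℝ := X.inn k (X.Mup k ψ) ψ with hAdef
        have hkn' : k ≤ n := by omega
        have hddψ := mup_dd hX hkn' ψ ψ
        have hAnn : 0 ≤ A := by
          rw [hAdef, hddψ]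
          have : X.inn (k + 1) (X.d k ψ) (X.d k ψ) = X.normSq (k + 1) (X.d k ψ) := rfl
          rw [this]
          have := hXnn (k + 1) (X.d k ψ)
          positivity
        have hA2 : A ^ 2 ≤ X.normSq k (X.Mup k ψ) * X.normSq k ψ := innCS hX k _ ψ
        have hA : A ≤ β' * S := by
          apply le_of_sq_le_sq hAnn (by positivity)
          calc A ^ 2 ≤ X.normSq k (X.Mup k ψ) * X.normSq k ψ := hA2
            _ ≤ (β' ^ 2 * S) * S := by
                apply mul_le_mul_of_nonneg_right _ hSnn
                exact hIH2
            _ = (β' * S) ^ 2 := by ring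
        -- S = ⟨d ψ, φ⟩
        have hadj : X.inn (k + 1) (X.d k ψ) φ = S := by
          rw [adj hX k ψ φ]
          rfl
        have hCS1 : S ^ 2 ≤ X.normSq (k + 1) (X.d k ψ) * X.normSq (k + 1) φ := by
          rw [← hadj]
          exact innCS hX (k + 1) _ φ
        have hdψ : X.normSq (k + 1) (X.d k ψ) = ((k : ℝ) + 1) * A := by
          have h1 : X.inn (k + 1) (X.d k ψ) (X.d k ψ) = X.normSq (k + 1) (X.d k ψ) := rfl
          rw [hAdef, hddψ, h1]
          field_simp
        have hchain : S ^ 2 ≤ ((k : ℝ) + 1) * β' * S * X.normSq (k + 1) φ := by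
          calc S ^ 2 ≤ X.normSq (k + 1) (X.d k ψ) * X.normSq (k + 1) φ := hCS1
            _ = ((k : ℝ) + 1) * A * X.normSq (k + 1) φ := by rw [hdψ]
            _ ≤ ((k : ℝ) + 1) * (β' * S) * X.normSq (k + 1) φ := by
                apply mul_le_mul_of_nonneg_right _ hNφ
                apply mul_le_mul_of_nonneg_left hA (by positivity)
            _ = ((k : ℝ) + 1) * β' * S * X.normSq (k + 1) φ := by ring
        have hSb : S ≤ ((k : ℝ) + 1) * β' * X.normSq (k + 1) φ := by
          rcases eq_or_lt_of_le hSnn with hS0 | hSpos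
          · rw [← hS0]
            positivity
          · nlinarith [hchain, hSpos]
        have hfin : ((k : ℝ) + 1) * β' = (k : ℝ) + (k : ℝ) * ((k : ℝ) + 1) * lam := by
          rw [hβ'def]
          have hk2 : ((k : ℝ) - 1 + 2) ≠ 0 := by
            have hk1' : (1 : ℝ) ≤ (k : ℝ) := by exact_mod_cast hkpos
            linarith
          field_simp
          ring
        rw [hfin] at hSb
        exact hSb
    -- E bound
    have hEdec := Edecomp hX (show 1 ≤ k + 1 by omega) φ
    have hk1 : k + 1 - 1 = k := by omega
    rw [hk1] at hEdec
    have hloc := locnorm hX (show 1 ≤ k + 1 by omega) φ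
    rw [hk1] at hloc
    have hE : Eg X (k + 1) φ φ
        ≤ lam * (((k : ℝ) + 1) * X.normSq (k + 1) φ) + S := by
      rw [← hEdec]
      have hstep : ∑ τ ∈ X.K k, Qf (X.link τ) (localize φ τ)
          ≤ ∑ τ ∈ X.K k, (lam * (X.link τ).normSq 1 (localize φ τ)
              + (X.dStar k φ τ) ^ 2 * X.m τ) := by
        apply Finset.sum_le_sum
        intro τ hτ
        exact E_tau_bound hX h0 hexp hknn hτ φ
      have hsplit : ∑ τ ∈ X.K k, (lam * (X.link τ).normSq 1 (localize φ τ)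
              + (X.dStar k φ τ) ^ 2 * X.m τ)
          = lam * (∑ τ ∈ X.K k, (X.link τ).normSq 1 (localize φ τ))
            + ∑ τ ∈ X.K k, (X.dStar k φ τ) ^ 2 * X.m τ := by
        rw [Finset.sum_add_distrib, Finset.mul_sum]
      have hSid : ∑ τ ∈ X.K k, (X.dStar k φ τ) ^ 2 * X.m τ = S := by
        rw [hSdef]
        unfold normSq inn
        apply Finset.sum_congr rfl
        intro τ _
        rw [hψdef]
        ring
      calc ∑ τ ∈ X.K k, Qf (X.link τ) (localize φ τ) ≤ _ := hstep
        _ = lam * (∑ τ ∈ X.K k, (X.link τ).normSq 1 (localize φ τ)) + S := by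
            rw [hsplit, hSid]
        _ = lam * (((k : ℝ) + 1) * X.normSq (k + 1) φ) + S := by
            rw [hloc]
            push_cast
            ring
    -- assemble
    have h_eq := mup_inn hX (k + 1) φ φ
    have hcast : ((k + 1 : ℕ) : ℝ) + 1 = (k : ℝ) + 2 := by push_cast; ring
    rw [hcast] at h_eq
    rw [h_eq]
    have hk2pos : (0 : ℝ) < (k : ℝ) + 2 := by positivity
    have hu : (1 / ((k : ℝ) + 2)) * ((k : ℝ) + 2) = 1 := by field_simp
    have hupos : 0 < 1 / ((k : ℝ) + 2) := by positivity
    have hβu : β = ((k : ℝ) + 1) * (1 / ((k : ℝ) + 2)) + ((k : ℝ) + 1) * lam := by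
      rw [hβdef]
      ring
    have hinnφ : X.inn (k + 1) φ φ = X.normSq (k + 1) φ := rfl
    rw [hinnφ, hβu]
    have hES : Eg X (k + 1) φ φ
        ≤ (((k : ℝ) + 1) * lam + (k : ℝ) + (k : ℝ) * ((k : ℝ) + 1) * lam)
            * X.normSq (k + 1) φ := by
      calc Eg X (k + 1) φ φ ≤ lam * (((k : ℝ) + 1) * X.normSq (k + 1) φ) + S := hE
        _ ≤ lam * (((k : ℝ) + 1) * X.normSq (k + 1) φ)
            + ((k : ℝ) + (k : ℝ) * ((k : ℝ) + 1) * lam) * X.normSq (k + 1) φ := by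
            linarith [hS]
        _ = (((k : ℝ) + 1) * lam + (k : ℝ) + (k : ℝ) * ((k : ℝ) + 1) * lam)
            * X.normSq (k + 1) φ := by ring
    have hkey : ((k : ℝ) + 1) ^ 2 * (1 / ((k : ℝ) + 2)) ≤ (k : ℝ) + 1 := by
      rw [mul_one_div, div_le_iff₀ hk2pos]
      nlinarith
    have hlam : 0 ≤ lam * X.normSq (k + 1) φ := mul_nonneg h0 hNφ
    calc 1 / ((k : ℝ) + 2) * X.normSq (k + 1) φ + 1 / ((k : ℝ) + 2) * Eg X (k + 1) φ φ
        ≤ 1 / ((k : ℝ) + 2) * X.normSq (k + 1) φ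
          + 1 / ((k : ℝ) + 2) * ((((k : ℝ) + 1) * lam + (k : ℝ)
              + (k : ℝ) * ((k : ℝ) + 1) * lam) * X.normSq (k + 1) φ) := by
          linarith [mul_le_mul_of_nonneg_left hES hupos.le]
      _ = ((k : ℝ) + 1) * (1 / ((k : ℝ) + 2)) * X.normSq (k + 1) φ
          + (((k : ℝ) + 1) ^ 2 * (1 / ((k : ℝ) + 2))) * (lam * X.normSq (k + 1) φ) := by
          ring
      _ ≤ ((k : ℝ) + 1) * (1 / ((k : ℝ) + 2)) * X.normSq (k + 1) φ
          + ((k : ℝ) + 1) * (lam * X.normSq (k + 1) φ) := by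
          have := mul_le_mul_of_nonneg_right hkey hlam
          linarith
      _ = (((k : ℝ) + 1) * (1 / ((k : ℝ) + 2)) + ((k : ℝ) + 1) * lam)
          * X.normSq (k + 1) φ := by ring
  intro φ hφ
  refine ⟨hray φ hφ, ?_⟩
  -- Norm bound from Rayleigh
  have hNφ : 0 ≤ X.normSq (k + 1) φ := hXnn (k + 1) φ
  set N : ℝ := X.normSq (k + 1) (X.Mup (k + 1) φ) with hNdef
  have hNnn : 0 ≤ N := hXnn (k + 1) _
  have hzero2 : X.cochainZero (k + 1) (X.Mup (k + 1) φ) := mup_zero hX hknn hφ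
  have hdd1 := mup_dd hX hknn φ (X.Mup (k + 1) φ)
  have hdd2 := mup_dd hX hknn φ φ
  have hdd3 := mup_dd hX hknn (X.Mup (k + 1) φ) (X.Mup (k + 1) φ)
  have hsa : X.inn (k + 1) (X.Mup (k + 1) φ) (X.Mup (k + 1) φ) = N := rfl
  have hcs := innCS hX (k + 1 + 1) (X.d (k + 1) φ) (X.d (k + 1) (X.Mup (k + 1) φ))
  have hx : X.inn (k + 1) (X.Mup (k + 1) φ) φ ≤ β * X.normSq (k + 1) φ := hray φ hφ
  have hy : X.inn (k + 1) (X.Mup (k + 1) (X.Mup (k + 1) φ)) (X.Mup (k + 1) φ)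
      ≤ β * N := hray _ hzero2
  have hxnn : 0 ≤ X.inn (k + 1) (X.Mup (k + 1) φ) φ := by
    rw [hdd2]
    have : X.inn (k + 1 + 1) (X.d (k + 1) φ) (X.d (k + 1) φ)
        = X.normSq (k + 1 + 1) (X.d (k + 1) φ) := rfl
    rw [this]
    have := hXnn (k + 1 + 1) (X.d (k + 1) φ)
    positivity
  have hynn : 0 ≤ X.inn (k + 1) (X.Mup (k + 1) (X.Mup (k + 1) φ)) (X.Mup (k + 1) φ) := by
    rw [mup_dd hX hknn _ _]
    have : X.inn (k + 1 + 1) (X.d (k + 1) (X.Mup (k + 1) φ)) (X.d (k + 1) (X.Mup (k + 1) φ))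
        = X.normSq (k + 1 + 1) (X.d (k + 1) (X.Mup (k + 1) φ)) := rfl
    rw [this]
    have := hXnn (k + 1 + 1) (X.d (k + 1) (X.Mup (k + 1) φ))
    positivity
  have hNsq : N ^ 2 ≤ (X.inn (k + 1) (X.Mup (k + 1) φ) φ)
      * (X.inn (k + 1) (X.Mup (k + 1) (X.Mup (k + 1) φ)) (X.Mup (k + 1) φ)) := by
    have h1 : N = (1 / (((k + 1 : ℕ) : ℝ) + 1))
        * X.inn (k + 1 + 1) (X.d (k + 1) φ) (X.d (k + 1) (X.Mup (k + 1) φ)) := by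
      rw [← hsa, hdd1]
    have hupos2 : (0 : ℝ) < 1 / (((k + 1 : ℕ) : ℝ) + 1) := by positivity
    have h2 : N ^ 2 = (1 / (((k + 1 : ℕ) : ℝ) + 1)) ^ 2
        * (X.inn (k + 1 + 1) (X.d (k + 1) φ) (X.d (k + 1) (X.Mup (k + 1) φ))) ^ 2 := by
      rw [h1]; ring
    have h3 : X.normSq (k + 1 + 1) (X.d (k + 1) φ)
        = X.inn (k + 1 + 1) (X.d (k + 1) φ) (X.d (k + 1) φ) := rfl
    have h4 : X.normSq (k + 1 + 1) (X.d (k + 1) (X.Mup (k + 1) φ))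
        = X.inn (k + 1 + 1) (X.d (k + 1) (X.Mup (k + 1) φ))
            (X.d (k + 1) (X.Mup (k + 1) φ)) := rfl
    calc N ^ 2 = (1 / (((k + 1 : ℕ) : ℝ) + 1)) ^ 2
        * (X.inn (k + 1 + 1) (X.d (k + 1) φ) (X.d (k + 1) (X.Mup (k + 1) φ))) ^ 2 := h2
      _ ≤ (1 / (((k + 1 : ℕ) : ℝ) + 1)) ^ 2
          * (X.normSq (k + 1 + 1) (X.d (k + 1) φ)
            * X.normSq (k + 1 + 1) (X.d (k + 1) (X.Mup (k + 1) φ))) := by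
          apply mul_le_mul_of_nonneg_left hcs (by positivity)
      _ = ((1 / (((k + 1 : ℕ) : ℝ) + 1))
            * X.inn (k + 1 + 1) (X.d (k + 1) φ) (X.d (k + 1) φ))
          * ((1 / (((k + 1 : ℕ) : ℝ) + 1))
            * X.inn (k + 1 + 1) (X.d (k + 1) (X.Mup (k + 1) φ))
                (X.d (k + 1) (X.Mup (k + 1) φ))) := by
          rw [h3, h4]; ring
      _ = (X.inn (k + 1) (X.Mup (k + 1) φ) φ)
          * (X.inn (k + 1) (X.Mup (k + 1) (X.Mup (k + 1) φ)) (X.Mup (k + 1) φ)) := by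
          rw [← hdd2, ← hdd3]
  have hNsq2 : N ^ 2 ≤ (β * X.normSq (k + 1) φ) * (β * N) := by
    calc N ^ 2 ≤ _ := hNsq
      _ ≤ (β * X.normSq (k + 1) φ) * (β * N) := by
          apply mul_le_mul hx hy hynn (by positivity)
  rcases eq_or_lt_of_le hNnn with hN0 | hNpos
  · rw [← hN0]
    positivity
  · nlinarith [hNsq2, hNpos]

end Aux


end WSC

open WSC
/-- Let `0 ≤ λ ≤ 1`. If `X` is a one-sided `λ`-local spectral
expander, then for every `0 ≤ k ≤ n-1` and every `φ ∈ C^k_0(X,ℝ)`,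
`‖M⁺_k φ‖ ≤ ((k+1)/(k+2) + (k+1)λ) ‖φ‖`. -/
theorem mixing_lazy_walk {V : Type*} [DecidableEq V] (X : WSC V) (n : ℕ)
    (hX : X.IsWSC n) (lam : ℝ) (h0 : 0 ≤ lam) (h1 : lam ≤ 1)
    (hexp : X.OneSided n lam) (k : ℕ) (hk : k < n) (φ : Finset V → ℝ)
    (hφ : X.cochainZero (k + 1) φ) :
    X.norm (k + 1) (X.Mup (k + 1) φ) ≤
      (((k : ℝ) + 1) / ((k : ℝ) + 2) + ((k : ℝ) + 1) * lam) * X.norm (k + 1) φ := by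
  have h := (main_induction hX h0 hexp k hk φ hφ).2
  have hβ0 : 0 ≤ ((k : ℝ) + 1) / ((k : ℝ) + 2) + ((k : ℝ) + 1) * lam := by positivity
  unfold WSC.norm
  calc Real.sqrt (X.normSq (k + 1) (X.Mup (k + 1) φ))
      ≤ Real.sqrt ((((k : ℝ) + 1) / ((k : ℝ) + 2) + ((k : ℝ) + 1) * lam) ^ 2
          * X.normSq (k + 1) φ) := Real.sqrt_le_sqrt h
    _ = (((k : ℝ) + 1) / ((k : ℝ) + 2) + ((k : ℝ) + 1) * lam)
          * Real.sqrt (X.normSq (k + 1) φ) := by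
        rw [Real.sqrt_mul (sq_nonneg _), Real.sqrt_sq hβ0]
end
end

section
/- Let 0 ≤ k ≤ n−1, let 0 < ε < 1, 0 ≤ λ ≤ 1, and let A ⊆ X(k) be ε-locally thin (F(A) ≤ ε). If X is a one-sided λ-local spectral expander, then ‖M⁺_k χ_A‖ ≤ ( 1/√(k+2) + √(ε + λ) ) ‖χ_A‖. -/
/-!
Framework: a pure `n`-dimensional finite weighted simplicial complex, following
Kaufman–Oppenheim, "High Order Random Walks: Beyond Spectral Gap".

A complex is given by its finset of faces (finsets of a vertex type `V`) together with
a weight function `m`.  We index levels by **cardinality**: `X.K c` is the set of faces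
with `c` elements, i.e. the set `X(k)` of `k`-dimensional faces for `k = c - 1`
(so `X(-1) = X.K 0`, and a pure `n`-dimensional complex has top level `X.K (n+1)`).
-/

noncomputable section

open Finset

open WSC

section KOAux

variable {V : Type*} [DecidableEq V]

lemma KO_mem_K {X : WSC V} {c : ℕ} {σ : Finset V} :
    σ ∈ X.K c ↔ σ ∈ X.faces ∧ σ.card = c := by
  simp [WSC.K]

lemma KO_m_pos {X : WSC V} {n : ℕ} (hX : X.IsWSC n) {σ : Finset V} (hσ : σ ∈ X.faces) :
    0 < X.m σ := hX.2.2.2.2.1 hσ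

lemma KO_down {X : WSC V} {n : ℕ} (hX : X.IsWSC n) {σ τ : Finset V}
    (hσ : σ ∈ X.faces) (h : τ ⊆ σ) : τ ∈ X.faces := hX.2.1 hσ h

lemma KO_link_faces {X : WSC V} {η a : Finset V} :
    a ∈ (X.link η).faces ↔ a ∈ X.faces ∧ a ∩ η = ∅ ∧ η ∪ a ∈ X.faces := by
  simp [WSC.link]

lemma KO_sum_swap_filter {α β : Type*} (s : Finset α) (t : Finset β)
    (r : α → β → Prop) [∀ a b, Decidable (r a b)] (f : α → β → ℝ) :
    ∑ a ∈ s, ∑ b ∈ t.filter (fun b => r a b), f a b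
      = ∑ b ∈ t, ∑ a ∈ s.filter (fun a => r a b), f a b := by
  simp only [Finset.sum_filter]
  exact Finset.sum_comm

lemma KO_weight_eq {X : WSC V} {n : ℕ} (hX : X.IsWSC n) {c : ℕ} (hc : c ≤ n)
    {τ : Finset V} (hτ : τ ∈ X.K c) :
    X.m τ = ∑ σ ∈ (X.K (c+1)).filter (fun σ => τ ⊆ σ), X.m σ := by
  obtain ⟨hf, hcard⟩ := KO_mem_K.mp hτ
  rw [hX.2.2.2.2.2 hf (by omega)]
  congr 1
  ext σ
  simp only [WSC.K, Finset.mem_filter, hcard]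
  tauto

lemma KO_K_filter_subset {X : WSC V} {n : ℕ} (hX : X.IsWSC n) {σ : Finset V}
    (hσ : σ ∈ X.faces) (c' : ℕ) :
    (X.K c').filter (fun τ => τ ⊆ σ) = σ.powersetCard c' := by
  ext τ
  simp only [WSC.K, Finset.mem_filter, Finset.mem_powersetCard]
  constructor
  · rintro ⟨⟨-, h2⟩, h3⟩; exact ⟨h3, h2⟩
  · rintro ⟨h1, h2⟩; exact ⟨⟨KO_down hX hσ h1, h2⟩, h1⟩

lemma KO_card_K_filter {X : WSC V} {n : ℕ} (hX : X.IsWSC n) {c : ℕ} {σ : Finset V}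
    (hσ : σ ∈ X.K (c+1)) : ((X.K c).filter (fun τ => τ ⊆ σ)).card = c + 1 := by
  obtain ⟨hf, hc⟩ := KO_mem_K.mp hσ
  rw [KO_K_filter_subset hX hf, Finset.card_powersetCard, hc, Nat.choose_succ_self_right]

lemma KO_normSq_nonneg {X : WSC V} {n : ℕ} (hX : X.IsWSC n) (c : ℕ) (φ : Finset V → ℝ) :
    0 ≤ X.normSq c φ :=
  Finset.sum_nonneg fun τ hτ =>
    mul_nonneg (KO_m_pos hX (KO_mem_K.mp hτ).1).le (mul_self_nonneg _)

lemma KO_sqrt_add_le (a b : ℝ) (ha : 0 ≤ a) (hb : 0 ≤ b) :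
    Real.sqrt (a + b) ≤ Real.sqrt a + Real.sqrt b := by
  have h : a + b ≤ (Real.sqrt a + Real.sqrt b)^2 := by
    have h1 := Real.sq_sqrt ha
    have h2 := Real.sq_sqrt hb
    nlinarith [Real.sqrt_nonneg a, Real.sqrt_nonneg b,
      mul_nonneg (Real.sqrt_nonneg a) (Real.sqrt_nonneg b)]
  calc Real.sqrt (a+b) ≤ Real.sqrt ((Real.sqrt a + Real.sqrt b)^2) := Real.sqrt_le_sqrt h
    _ = Real.sqrt a + Real.sqrt b := Real.sqrt_sq (by positivity)

/-- pair sum `S = Σ_τ Σ_{τ' : τ∪τ' ∈ X(c+1)} m(τ∪τ') φτ φτ'`. -/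
def KOpairSum (X : WSC V) (c : ℕ) (φ : Finset V → ℝ) : ℝ :=
  ∑ τ ∈ X.K c, ∑ τ' ∈ (X.K c).filter (fun τ' => τ ∪ τ' ∈ X.K (c+1)),
    X.m (τ ∪ τ') * (φ τ * φ τ')

lemma KO_Mup_eq {X : WSC V} {n : ℕ} (hX : X.IsWSC n) {c : ℕ} (hc : c ≤ n)
    (φ : Finset V → ℝ) {τ : Finset V} (hτ : τ ∈ X.K c) :
    X.Mup c φ τ = (1/((c:ℝ)+1)) * X.dStar c (X.d c φ) τ := by
  obtain ⟨hτf, hτc⟩ := KO_mem_K.mp hτ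
  have hmτ : X.m τ ≠ 0 := (KO_m_pos hX hτf).ne'
  have huni : ∀ σ ∈ (X.K (c+1)).filter (fun σ => τ ⊆ σ),
      ∀ τ' ∈ ((X.K c).filter (fun τ' => τ' ⊆ σ)).erase τ, τ ∪ τ' = σ := by
    intro σ hσ τ' hτ'
    obtain ⟨hσK, hτσ⟩ := Finset.mem_filter.mp hσ
    obtain ⟨hσf, hσc⟩ := KO_mem_K.mp hσK
    obtain ⟨hne, hτ'm⟩ := Finset.mem_erase.mp hτ'
    obtain ⟨hτ'K, hτ'σ⟩ := Finset.mem_filter.mp hτ'm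
    obtain ⟨hτ'f, hτ'c⟩ := KO_mem_K.mp hτ'K
    have hsub : τ ∪ τ' ⊆ σ := Finset.union_subset hτσ hτ'σ
    have hle : σ.card ≤ (τ ∪ τ').card := by
      by_contra hcon
      push_neg at hcon
      have h2 : τ = τ ∪ τ' :=
        Finset.eq_of_subset_of_card_le Finset.subset_union_left (by omega)
      have h3 : τ' ⊆ τ := by rw [h2]; exact Finset.subset_union_right
      exact hne (Finset.eq_of_subset_of_card_le h3 (by omega))
    exact Finset.eq_of_subset_of_card_le hsub hle
  have key : X.dStar c (X.d c φ) τ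
      = φ τ + ∑ τ' ∈ (X.K c).filter (fun τ' => τ ∪ τ' ∈ X.K (c+1)),
          (X.m (τ ∪ τ') / X.m τ) * φ τ' := by
    have hsplit : X.dStar c (X.d c φ) τ
        = (∑ σ ∈ (X.K (c+1)).filter (fun σ => τ ⊆ σ), X.m σ / X.m τ) * φ τ
          + ∑ σ ∈ (X.K (c+1)).filter (fun σ => τ ⊆ σ),
              ∑ τ' ∈ ((X.K c).filter (fun τ' => τ' ⊆ σ)).erase τ,
                (X.m σ / X.m τ) * φ τ' := by
      unfold WSC.dStar WSC.d
      rw [Finset.sum_mul, ← Finset.sum_add_distrib]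
      refine Finset.sum_congr rfl fun σ hσ => ?_
      obtain ⟨hσK, hτσ⟩ := Finset.mem_filter.mp hσ
      have hmem : τ ∈ (X.K c).filter (fun τ' => τ' ⊆ σ) :=
        Finset.mem_filter.mpr ⟨hτ, hτσ⟩
      rw [← Finset.add_sum_erase _ φ hmem, mul_add, Finset.mul_sum]
    have hfst : (∑ σ ∈ (X.K (c+1)).filter (fun σ => τ ⊆ σ), X.m σ / X.m τ) = 1 := by
      rw [← Finset.sum_div, ← KO_weight_eq hX hc hτ, div_self hmτ]
    have hre : ∑ σ ∈ (X.K (c+1)).filter (fun σ => τ ⊆ σ),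
        ∑ τ' ∈ ((X.K c).filter (fun τ' => τ' ⊆ σ)).erase τ, (X.m σ / X.m τ) * φ τ'
        = ∑ τ' ∈ (X.K c).filter (fun τ' => τ ∪ τ' ∈ X.K (c+1)),
            (X.m (τ ∪ τ') / X.m τ) * φ τ' := by
      rw [Finset.sum_sigma']
      refine Finset.sum_nbij' (fun p => p.2) (fun τ' => ⟨τ ∪ τ', τ'⟩) ?_ ?_ ?_ ?_ ?_
      · rintro ⟨σ, τ'⟩ hp
        rw [Finset.mem_sigma] at hp
        have h1 := huni σ hp.1 τ' hp.2
        have hτ'K : τ' ∈ X.K c :=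
          (Finset.mem_filter.mp (Finset.mem_erase.mp hp.2).2).1
        refine Finset.mem_filter.mpr ⟨hτ'K, ?_⟩
        rw [h1]
        exact (Finset.mem_filter.mp hp.1).1
      · intro τ' hτ'
        obtain ⟨hτ'K, hu⟩ := Finset.mem_filter.mp hτ'
        rw [Finset.mem_sigma]
        refine ⟨Finset.mem_filter.mpr ⟨hu, Finset.subset_union_left⟩, ?_⟩
        refine Finset.mem_erase.mpr ⟨?_, Finset.mem_filter.mpr ⟨hτ'K, Finset.subset_union_right⟩⟩
        intro h
        have h' : τ' = τ := h
        obtain ⟨-, hc'⟩ := KO_mem_K.mp hu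
        rw [h', Finset.union_self] at hc'
        omega
      · rintro ⟨σ, τ'⟩ hp
        rw [Finset.mem_sigma] at hp
        have h1 := huni σ hp.1 τ' hp.2
        simp [h1]
      · intro τ' _; rfl
      · rintro ⟨σ, τ'⟩ hp
        rw [Finset.mem_sigma] at hp
        have h1 := huni σ hp.1 τ' hp.2
        rw [h1]
    rw [hsplit, hfst, one_mul, hre]
  rw [key]
  unfold WSC.Mup
  rw [mul_add, Finset.mul_sum]
  congr 1
  refine Finset.sum_congr rfl fun τ' _ => ?_
  have hcne : ((c:ℝ)+1) ≠ 0 := by positivity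
  field_simp
  try ring

lemma KO_inn_Mup_eq {X : WSC V} {n : ℕ} (hX : X.IsWSC n) {c : ℕ} (hc : c ≤ n)
    (φ : Finset V → ℝ) :
    X.inn c (X.Mup c φ) φ = (1/((c:ℝ)+1)) * X.normSq (c+1) (X.d c φ) := by
  unfold WSC.inn
  have h1 : ∀ τ ∈ X.K c, X.m τ * (X.Mup c φ τ * φ τ)
      = (1/((c:ℝ)+1)) * ∑ σ ∈ (X.K (c+1)).filter (fun σ => τ ⊆ σ),
          X.m σ * (X.d c φ σ * φ τ) := by
    intro τ hτ
    obtain ⟨hτf, -⟩ := KO_mem_K.mp hτ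
    have hmτ : X.m τ ≠ 0 := (KO_m_pos hX hτf).ne'
    rw [KO_Mup_eq hX hc φ hτ]
    unfold WSC.dStar
    calc X.m τ * ((1/((c:ℝ)+1)) * (∑ σ ∈ (X.K (c+1)).filter (fun σ => τ ⊆ σ),
            (X.m σ / X.m τ) * X.d c φ σ) * φ τ)
        = (1/((c:ℝ)+1)) * ((∑ σ ∈ (X.K (c+1)).filter (fun σ => τ ⊆ σ),
            X.m τ * ((X.m σ / X.m τ) * X.d c φ σ)) * φ τ) := by
          rw [← Finset.mul_sum]; ring
      _ = (1/((c:ℝ)+1)) * ∑ σ ∈ (X.K (c+1)).filter (fun σ => τ ⊆ σ),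
            X.m τ * ((X.m σ / X.m τ) * X.d c φ σ) * φ τ := by
          rw [Finset.sum_mul]
      _ = (1/((c:ℝ)+1)) * ∑ σ ∈ (X.K (c+1)).filter (fun σ => τ ⊆ σ),
            X.m σ * (X.d c φ σ * φ τ) := by
          congr 1
          refine Finset.sum_congr rfl fun σ hσ => ?_
          field_simp
          try ring
  rw [Finset.sum_congr rfl h1, ← Finset.mul_sum]
  congr 1
  rw [KO_sum_swap_filter (X.K c) (X.K (c+1)) (fun τ σ => τ ⊆ σ)
    (fun τ σ => X.m σ * (X.d c φ σ * φ τ))]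
  unfold WSC.normSq WSC.inn
  refine Finset.sum_congr rfl fun σ hσ => ?_
  rw [← Finset.mul_sum]
  congr 1
  rw [← Finset.mul_sum]
  rfl

lemma KO_normSq_dStar_le {X : WSC V} {n : ℕ} (hX : X.IsWSC n) {c : ℕ} (hc : c ≤ n)
    (ψ : Finset V → ℝ) :
    X.normSq c (X.dStar c ψ) ≤ ((c:ℝ)+1) * X.normSq (c+1) ψ := by
  unfold WSC.normSq WSC.inn WSC.dStar
  have h1 : ∀ τ ∈ X.K c,
      X.m τ * ((∑ σ ∈ (X.K (c+1)).filter (fun σ => τ ⊆ σ), (X.m σ / X.m τ) * ψ σ)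
        * (∑ σ ∈ (X.K (c+1)).filter (fun σ => τ ⊆ σ), (X.m σ / X.m τ) * ψ σ))
      ≤ ∑ σ ∈ (X.K (c+1)).filter (fun σ => τ ⊆ σ), X.m σ * (ψ σ * ψ σ) := by
    intro τ hτ
    obtain ⟨hτf, hτc⟩ := KO_mem_K.mp hτ
    have hm : 0 < X.m τ := KO_m_pos hX hτf
    set S := (X.K (c+1)).filter (fun σ => τ ⊆ σ) with hS
    have hnn : ∀ σ ∈ S, 0 ≤ X.m σ / X.m τ := fun σ hσ =>
      div_nonneg (KO_m_pos hX (KO_mem_K.mp (Finset.mem_filter.mp hσ).1).1).le hm.le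
    have hsum1 : (∑ σ ∈ S, X.m σ / X.m τ) = 1 := by
      rw [← Finset.sum_div, ← KO_weight_eq hX hc hτ, div_self hm.ne']
    have hcs : (∑ σ ∈ S, (X.m σ / X.m τ) * ψ σ)^2
        ≤ ∑ σ ∈ S, (X.m σ / X.m τ) * (ψ σ)^2 := by
      have hCS := Finset.sum_mul_sq_le_sq_mul_sq S (fun σ => Real.sqrt (X.m σ / X.m τ))
        (fun σ => Real.sqrt (X.m σ / X.m τ) * ψ σ)
      calc (∑ σ ∈ S, (X.m σ / X.m τ) * ψ σ)^2
          = (∑ σ ∈ S, Real.sqrt (X.m σ / X.m τ) * (Real.sqrt (X.m σ / X.m τ) * ψ σ))^2 := by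
            congr 1
            refine Finset.sum_congr rfl fun σ hσ => ?_
            rw [← mul_assoc, Real.mul_self_sqrt (hnn σ hσ)]
        _ ≤ (∑ σ ∈ S, Real.sqrt (X.m σ / X.m τ)^2)
              * (∑ σ ∈ S, (Real.sqrt (X.m σ / X.m τ) * ψ σ)^2) := hCS
        _ = (∑ σ ∈ S, (X.m σ / X.m τ)) * (∑ σ ∈ S, (X.m σ / X.m τ) * (ψ σ)^2) := by
            congr 1
            · exact Finset.sum_congr rfl fun σ hσ => Real.sq_sqrt (hnn σ hσ)
            · refine Finset.sum_congr rfl fun σ hσ => ?_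
              rw [mul_pow, Real.sq_sqrt (hnn σ hσ)]
        _ = ∑ σ ∈ S, (X.m σ / X.m τ) * (ψ σ)^2 := by rw [hsum1, one_mul]
    calc X.m τ * ((∑ σ ∈ S, (X.m σ / X.m τ) * ψ σ) * (∑ σ ∈ S, (X.m σ / X.m τ) * ψ σ))
        = X.m τ * (∑ σ ∈ S, (X.m σ / X.m τ) * ψ σ)^2 := by ring
      _ ≤ X.m τ * ∑ σ ∈ S, (X.m σ / X.m τ) * (ψ σ)^2 :=
          mul_le_mul_of_nonneg_left hcs hm.le
      _ = ∑ σ ∈ S, X.m σ * (ψ σ * ψ σ) := by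
          rw [Finset.mul_sum]
          refine Finset.sum_congr rfl fun σ hσ => ?_
          field_simp
          try ring
          try simp
  calc ∑ τ ∈ X.K c, X.m τ * ((∑ σ ∈ (X.K (c+1)).filter (fun σ => τ ⊆ σ), (X.m σ / X.m τ) * ψ σ)
        * (∑ σ ∈ (X.K (c+1)).filter (fun σ => τ ⊆ σ), (X.m σ / X.m τ) * ψ σ))
      ≤ ∑ τ ∈ X.K c, ∑ σ ∈ (X.K (c+1)).filter (fun σ => τ ⊆ σ), X.m σ * (ψ σ * ψ σ) :=
        Finset.sum_le_sum h1
    _ = ∑ σ ∈ X.K (c+1), ∑ τ ∈ (X.K c).filter (fun τ => τ ⊆ σ), X.m σ * (ψ σ * ψ σ) :=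
        KO_sum_swap_filter (X.K c) (X.K (c+1)) (fun τ σ => τ ⊆ σ)
          (fun τ σ => X.m σ * (ψ σ * ψ σ))
    _ = ∑ σ ∈ X.K (c+1), ((c:ℝ)+1) * (X.m σ * (ψ σ * ψ σ)) := by
        refine Finset.sum_congr rfl fun σ hσ => ?_
        rw [Finset.sum_const, KO_card_K_filter hX hσ, nsmul_eq_mul]
        push_cast
        ring
    _ = ((c:ℝ)+1) * ∑ σ ∈ X.K (c+1), X.m σ * (ψ σ * ψ σ) := by rw [← Finset.mul_sum]

lemma KO_normSq_Mup_le_inn {X : WSC V} {n : ℕ} (hX : X.IsWSC n) {c : ℕ} (hc : c ≤ n)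
    (φ : Finset V → ℝ) :
    X.normSq c (X.Mup c φ) ≤ X.inn c (X.Mup c φ) φ := by
  have h1 : X.normSq c (X.Mup c φ)
      = (1/((c:ℝ)+1))^2 * X.normSq c (X.dStar c (X.d c φ)) := by
    unfold WSC.normSq WSC.inn
    rw [Finset.mul_sum]
    refine Finset.sum_congr rfl fun τ hτ => ?_
    rw [KO_Mup_eq hX hc φ hτ]
    ring
  rw [h1, KO_inn_Mup_eq hX hc φ]
  have hc1 : (0:ℝ) < (c:ℝ)+1 := by positivity
  calc (1/((c:ℝ)+1))^2 * X.normSq c (X.dStar c (X.d c φ))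
      ≤ (1/((c:ℝ)+1))^2 * (((c:ℝ)+1) * X.normSq (c+1) (X.d c φ)) :=
        mul_le_mul_of_nonneg_left (KO_normSq_dStar_le hX hc (X.d c φ)) (by positivity)
    _ = (1/((c:ℝ)+1)) * X.normSq (c+1) (X.d c φ) := by
        field_simp
        try ring

lemma KO_inn_Mup_pair {X : WSC V} {n : ℕ} (hX : X.IsWSC n) (c : ℕ) (φ : Finset V → ℝ) :
    ((c:ℝ)+1) * X.inn c (X.Mup c φ) φ = X.normSq c φ + KOpairSum X c φ := by
  unfold WSC.normSq KOpairSum WSC.inn WSC.Mup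
  rw [Finset.mul_sum, ← Finset.sum_add_distrib]
  refine Finset.sum_congr rfl fun τ hτ => ?_
  obtain ⟨hτf, -⟩ := KO_mem_K.mp hτ
  have hmτ : X.m τ ≠ 0 := (KO_m_pos hX hτf).ne'
  have hcne : ((c:ℝ)+1) ≠ 0 := by positivity
  rw [show ∀ S : ℝ, ((c:ℝ)+1) * (X.m τ * ((1 / ((c:ℝ) + 1) * φ τ + S) * φ τ))
      = X.m τ * (φ τ * φ τ) * (((c:ℝ)+1) * (1/((c:ℝ)+1))) + ((c:ℝ)+1) * X.m τ * φ τ * S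
      from fun S => by ring]
  rw [mul_one_div_cancel hcne, mul_one, Finset.mul_sum]
  congr 1
  refine Finset.sum_congr rfl fun τ' _ => ?_
  field_simp
  try ring

lemma KO_inn_Mup'_one (Y : WSC V) (hpos1 : ∀ a ∈ Y.K 1, Y.m a ≠ 0) (χ : Finset V → ℝ) :
    Y.inn 1 (Y.Mup' 1 χ) χ = KOpairSum Y 1 χ := by
  unfold WSC.inn WSC.Mup' WSC.Mup KOpairSum
  simp only [Nat.cast_one]
  refine Finset.sum_congr rfl fun a ha => ?_
  have hm := hpos1 a ha
  rw [show ∀ S : ℝ, Y.m a * ((((1:ℝ)+1)/1 * (1/((1:ℝ)+1) * χ a + S) - 1/1 * χ a) * χ a)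
      = 2 * Y.m a * χ a * S from fun S => by ring]
  rw [Finset.mul_sum]
  refine Finset.sum_congr rfl fun b _ => ?_
  field_simp
  try ring

lemma KO_col (Y : WSC V)
    (hm1 : ∀ a ∈ Y.K 1, ∑ b ∈ (Y.K 1).filter (fun b => a ∪ b ∈ Y.K 2), Y.m (a ∪ b) = Y.m a) :
    ∀ b ∈ Y.K 1, ∑ a ∈ (Y.K 1).filter (fun a => a ∪ b ∈ Y.K 2), Y.m (a ∪ b) = Y.m b := by
  intro b hb
  have hset : (Y.K 1).filter (fun a => a ∪ b ∈ Y.K 2)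
      = (Y.K 1).filter (fun a => b ∪ a ∈ Y.K 2) := by
    apply Finset.filter_congr
    intro a _
    rw [Finset.union_comm]
  rw [hset, ← hm1 b hb]
  exact Finset.sum_congr rfl fun a _ => by rw [Finset.union_comm]

lemma KO_pairSum_le_normSq (Y : WSC V) (hpos2 : ∀ p ∈ Y.K 2, 0 ≤ Y.m p)
    (hm1 : ∀ a ∈ Y.K 1, ∑ b ∈ (Y.K 1).filter (fun b => a ∪ b ∈ Y.K 2), Y.m (a ∪ b) = Y.m a)
    (χ : Finset V → ℝ) : KOpairSum Y 1 χ ≤ Y.normSq 1 χ := by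
  have hstep : KOpairSum Y 1 χ ≤ ∑ a ∈ Y.K 1, ∑ b ∈ (Y.K 1).filter (fun b => a ∪ b ∈ Y.K 2),
      Y.m (a ∪ b) * ((χ a)^2/2 + (χ b)^2/2) := by
    refine Finset.sum_le_sum fun a ha => Finset.sum_le_sum fun b hb => ?_
    have hm : 0 ≤ Y.m (a ∪ b) := hpos2 _ (Finset.mem_filter.mp hb).2
    have h2 : χ a * χ b ≤ (χ a)^2/2 + (χ b)^2/2 := by nlinarith [sq_nonneg (χ a - χ b)]
    exact mul_le_mul_of_nonneg_left h2 hm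
  have hsplit : ∑ a ∈ Y.K 1, ∑ b ∈ (Y.K 1).filter (fun b => a ∪ b ∈ Y.K 2),
      Y.m (a ∪ b) * ((χ a)^2/2 + (χ b)^2/2)
      = (∑ a ∈ Y.K 1, ∑ b ∈ (Y.K 1).filter (fun b => a ∪ b ∈ Y.K 2), Y.m (a ∪ b) * ((χ a)^2/2))
        + ∑ a ∈ Y.K 1, ∑ b ∈ (Y.K 1).filter (fun b => a ∪ b ∈ Y.K 2), Y.m (a ∪ b) * ((χ b)^2/2) := by
    rw [← Finset.sum_add_distrib]
    refine Finset.sum_congr rfl fun a _ => ?_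
    rw [← Finset.sum_add_distrib]
    exact Finset.sum_congr rfl fun b _ => by ring
  have hfst : ∑ a ∈ Y.K 1, ∑ b ∈ (Y.K 1).filter (fun b => a ∪ b ∈ Y.K 2),
      Y.m (a ∪ b) * ((χ a)^2/2) = ∑ a ∈ Y.K 1, Y.m a * ((χ a)^2/2) := by
    refine Finset.sum_congr rfl fun a ha => ?_
    rw [← Finset.sum_mul, hm1 a ha]
  have hsnd : ∑ a ∈ Y.K 1, ∑ b ∈ (Y.K 1).filter (fun b => a ∪ b ∈ Y.K 2),
      Y.m (a ∪ b) * ((χ b)^2/2) = ∑ b ∈ Y.K 1, Y.m b * ((χ b)^2/2) := by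
    rw [KO_sum_swap_filter (Y.K 1) (Y.K 1) (fun a b => a ∪ b ∈ Y.K 2)
      (fun a b => Y.m (a ∪ b) * ((χ b)^2/2))]
    refine Finset.sum_congr rfl fun b hb => ?_
    rw [← Finset.sum_mul, KO_col Y hm1 b hb]
  calc KOpairSum Y 1 χ ≤ _ := hstep
    _ = (∑ a ∈ Y.K 1, Y.m a * ((χ a)^2/2)) + ∑ b ∈ Y.K 1, Y.m b * ((χ b)^2/2) := by
        rw [hsplit, hfst, hsnd]
    _ = Y.normSq 1 χ := by
        unfold WSC.normSq WSC.inn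
        rw [← Finset.sum_add_distrib]
        exact Finset.sum_congr rfl fun a _ => by ring

lemma KO_T_bound (Y : WSC V) (lam : ℝ) (hlam : 0 ≤ lam)
    (hpos1 : ∀ a ∈ Y.K 1, 0 < Y.m a)
    (hpos2 : ∀ p ∈ Y.K 2, 0 ≤ Y.m p)
    (hm0pos : 0 < Y.m ∅)
    (hm0 : Y.m ∅ = ∑ a ∈ Y.K 1, Y.m a)
    (hm1 : ∀ a ∈ Y.K 1, ∑ b ∈ (Y.K 1).filter (fun b => a ∪ b ∈ Y.K 2), Y.m (a ∪ b) = Y.m a)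
    (hsec : Y.secondEig ≤ lam) (ψ : Finset V → ℝ) :
    KOpairSum Y 1 ψ ≤ (∑ a ∈ Y.K 1, Y.m a * ψ a)^2 / Y.m ∅ + lam * Y.normSq 1 ψ := by
  set M := Y.m ∅ with hM
  set A0 := ∑ a ∈ Y.K 1, Y.m a * ψ a with hA0
  set a0 := A0 / M with ha0
  set g : Finset V → ℝ := fun x => ψ x - a0 with hg
  have hMne : M ≠ 0 := hm0pos.ne'
  have hψeq : ∀ x, ψ x = g x + a0 := fun x => by simp [hg]
  have hmean : ∑ a ∈ Y.K 1, Y.m a * g a = 0 := by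
    have : ∑ a ∈ Y.K 1, Y.m a * g a = A0 - (∑ a ∈ Y.K 1, Y.m a) * a0 := by
      rw [hA0, Finset.sum_mul, ← Finset.sum_sub_distrib]
      exact Finset.sum_congr rfl fun a _ => by simp [hg]; ring
    rw [this, ← hm0, ha0]
    field_simp
    ring
  -- expansion of pairSum ψ
  have hexpand : KOpairSum Y 1 ψ
      = KOpairSum Y 1 g
        + a0 * (∑ a ∈ Y.K 1, ∑ b ∈ (Y.K 1).filter (fun b => a ∪ b ∈ Y.K 2), Y.m (a ∪ b) * g a)
        + a0 * (∑ a ∈ Y.K 1, ∑ b ∈ (Y.K 1).filter (fun b => a ∪ b ∈ Y.K 2), Y.m (a ∪ b) * g b)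
        + a0^2 * (∑ a ∈ Y.K 1, ∑ b ∈ (Y.K 1).filter (fun b => a ∪ b ∈ Y.K 2), Y.m (a ∪ b)) := by
    unfold KOpairSum
    rw [Finset.mul_sum, Finset.mul_sum, Finset.mul_sum,
      ← Finset.sum_add_distrib, ← Finset.sum_add_distrib, ← Finset.sum_add_distrib]
    refine Finset.sum_congr rfl fun a _ => ?_
    rw [Finset.mul_sum, Finset.mul_sum, Finset.mul_sum,
      ← Finset.sum_add_distrib, ← Finset.sum_add_distrib, ← Finset.sum_add_distrib]
    refine Finset.sum_congr rfl fun b _ => ?_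
    rw [hψeq a, hψeq b]
    ring
  have hT1 : ∑ a ∈ Y.K 1, ∑ b ∈ (Y.K 1).filter (fun b => a ∪ b ∈ Y.K 2), Y.m (a ∪ b) * g a
      = 0 := by
    calc ∑ a ∈ Y.K 1, ∑ b ∈ (Y.K 1).filter (fun b => a ∪ b ∈ Y.K 2), Y.m (a ∪ b) * g a
        = ∑ a ∈ Y.K 1, Y.m a * g a := by
          refine Finset.sum_congr rfl fun a ha => ?_
          rw [← Finset.sum_mul, hm1 a ha]
      _ = 0 := hmean
  have hT2 : ∑ a ∈ Y.K 1, ∑ b ∈ (Y.K 1).filter (fun b => a ∪ b ∈ Y.K 2), Y.m (a ∪ b) * g b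
      = 0 := by
    rw [KO_sum_swap_filter (Y.K 1) (Y.K 1) (fun a b => a ∪ b ∈ Y.K 2)
      (fun a b => Y.m (a ∪ b) * g b)]
    calc ∑ b ∈ Y.K 1, ∑ a ∈ (Y.K 1).filter (fun a => a ∪ b ∈ Y.K 2), Y.m (a ∪ b) * g b
        = ∑ b ∈ Y.K 1, Y.m b * g b := by
          refine Finset.sum_congr rfl fun b hb => ?_
          rw [← Finset.sum_mul, KO_col Y hm1 b hb]
      _ = 0 := hmean
  have hT3 : ∑ a ∈ Y.K 1, ∑ b ∈ (Y.K 1).filter (fun b => a ∪ b ∈ Y.K 2), Y.m (a ∪ b) = M := by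
    calc ∑ a ∈ Y.K 1, ∑ b ∈ (Y.K 1).filter (fun b => a ∪ b ∈ Y.K 2), Y.m (a ∪ b)
        = ∑ a ∈ Y.K 1, Y.m a := Finset.sum_congr rfl fun a ha => hm1 a ha
      _ = M := hm0.symm
  have hgnn : 0 ≤ Y.normSq 1 g :=
    Finset.sum_nonneg fun a ha => mul_nonneg (hpos1 a ha).le (mul_self_nonneg _)
  have hgle : KOpairSum Y 1 g ≤ lam * Y.normSq 1 g := by
    by_cases h0 : Y.normSq 1 g = 0
    · have hz : ∀ a ∈ Y.K 1, g a = 0 := by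
        intro a ha
        have h := (Finset.sum_eq_zero_iff_of_nonneg
          (fun a ha => mul_nonneg (hpos1 a ha).le (mul_self_nonneg (g a)))).mp h0 a ha
        rcases mul_eq_zero.mp h with h' | h'
        · exact absurd h' (hpos1 a ha).ne'
        · exact mul_self_eq_zero.mp h'
      have hzz : KOpairSum Y 1 g = 0 :=
        Finset.sum_eq_zero fun a ha => Finset.sum_eq_zero fun b hb => by rw [hz a ha]; ring
      rw [hzz, h0, mul_zero]
    · have hgpos : 0 < Y.normSq 1 g := lt_of_le_of_ne hgnn (Ne.symm h0)
      have hmem : KOpairSum Y 1 g / Y.normSq 1 g ∈ {r : ℝ | ∃ χ : Finset V → ℝ,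
          Y.normSq 1 χ ≠ 0 ∧ (∑ v ∈ Y.K 1, Y.m v * χ v) = 0 ∧
          r = Y.inn 1 (Y.Mup' 1 χ) χ / Y.normSq 1 χ} :=
        ⟨g, h0, hmean, by rw [KO_inn_Mup'_one Y (fun a ha => (hpos1 a ha).ne') g]⟩
      have hbdd : BddAbove {r : ℝ | ∃ χ : Finset V → ℝ,
          Y.normSq 1 χ ≠ 0 ∧ (∑ v ∈ Y.K 1, Y.m v * χ v) = 0 ∧
          r = Y.inn 1 (Y.Mup' 1 χ) χ / Y.normSq 1 χ} := by
        refine ⟨1, ?_⟩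
        rintro r ⟨χ, hχ0, -, rfl⟩
        have hχnn : 0 ≤ Y.normSq 1 χ :=
          Finset.sum_nonneg fun a ha => mul_nonneg (hpos1 a ha).le (mul_self_nonneg _)
        have hχpos : 0 < Y.normSq 1 χ := lt_of_le_of_ne hχnn (Ne.symm hχ0)
        rw [KO_inn_Mup'_one Y (fun a ha => (hpos1 a ha).ne') χ, div_le_one hχpos]
        exact KO_pairSum_le_normSq Y hpos2 hm1 χ
      have hle := le_csSup hbdd hmem
      have hle2 : KOpairSum Y 1 g / Y.normSq 1 g ≤ lam := le_trans hle hsec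
      rw [div_le_iff₀ hgpos] at hle2
      linarith
  have hnormle : Y.normSq 1 g ≤ Y.normSq 1 ψ := by
    have hid : Y.normSq 1 ψ = Y.normSq 1 g + 2*a0*(∑ a ∈ Y.K 1, Y.m a * g a)
        + a0^2 * (∑ a ∈ Y.K 1, Y.m a) := by
      unfold WSC.normSq WSC.inn
      rw [Finset.mul_sum, Finset.mul_sum, ← Finset.sum_add_distrib, ← Finset.sum_add_distrib]
      refine Finset.sum_congr rfl fun a _ => ?_
      rw [hψeq a]
      ring
    have hMnn : 0 ≤ ∑ a ∈ Y.K 1, Y.m a := by rw [← hm0]; exact hm0pos.le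
    rw [hid, hmean]
    nlinarith [sq_nonneg a0]
  have ha0M : a0^2 * M = A0^2 / M := by
    rw [ha0]
    field_simp
  calc KOpairSum Y 1 ψ = KOpairSum Y 1 g + a0^2 * M := by
        rw [hexpand, hT1, hT2, hT3]; ring
    _ ≤ lam * Y.normSq 1 g + A0^2 / M := by rw [← ha0M]; linarith
    _ ≤ lam * Y.normSq 1 ψ + A0^2 / M := by
        have := mul_le_mul_of_nonneg_left hnormle hlam
        linarith
    _ = A0^2 / M + lam * Y.normSq 1 ψ := by ring

lemma KO_link_sum {X : WSC V} {n : ℕ} (hX : X.IsWSC n) {e : ℕ} {η : Finset V}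
    (hη : η ∈ X.K e) (j : ℕ) (f : Finset V → ℝ) :
    ∑ a ∈ (X.link η).K j, f (η ∪ a) = ∑ τ ∈ (X.K (e+j)).filter (fun τ => η ⊆ τ), f τ := by
  obtain ⟨hηf, hηc⟩ := KO_mem_K.mp hη
  refine Finset.sum_nbij' (fun a => η ∪ a) (fun τ => τ \ η) ?_ ?_ ?_ ?_ ?_
  · intro a ha
    obtain ⟨haf, hac⟩ := KO_mem_K.mp ha
    obtain ⟨haX, hdisj, hun⟩ := KO_link_faces.mp haf
    have hd : Disjoint η a := (Finset.disjoint_iff_inter_eq_empty.mpr hdisj).symm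
    refine Finset.mem_filter.mpr ⟨KO_mem_K.mpr ⟨hun, ?_⟩, Finset.subset_union_left⟩
    rw [Finset.card_union_of_disjoint hd, hηc, hac]
  · intro τ hτ
    obtain ⟨hτK, hsub⟩ := Finset.mem_filter.mp hτ
    obtain ⟨hτf, hτc⟩ := KO_mem_K.mp hτK
    refine KO_mem_K.mpr ⟨KO_link_faces.mpr ⟨KO_down hX hτf Finset.sdiff_subset,
      Finset.sdiff_inter_self η τ, ?_⟩, ?_⟩
    · rw [Finset.union_sdiff_of_subset hsub]; exact hτf
    · rw [Finset.card_sdiff_of_subset hsub, hτc, hηc]; omega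
  · intro a ha
    obtain ⟨haf, -⟩ := KO_mem_K.mp ha
    obtain ⟨-, hdisj, -⟩ := KO_link_faces.mp haf
    exact Finset.union_sdiff_cancel_left ((Finset.disjoint_iff_inter_eq_empty.mpr hdisj).symm)
  · intro τ hτ
    exact Finset.union_sdiff_of_subset (Finset.mem_filter.mp hτ).2
  · intro a _
    rfl

lemma KO_link_m0 {X : WSC V} {n : ℕ} (hX : X.IsWSC n) {e : ℕ} (hen : e ≤ n) {η : Finset V}
    (hη : η ∈ X.K e) :
    (X.link η).m ∅ = ∑ a ∈ (X.link η).K 1, (X.link η).m a := by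
  have h := KO_link_sum hX hη 1 X.m
  show X.m (η ∪ ∅) = _
  rw [Finset.union_empty, KO_weight_eq hX hen hη, ← h]
  rfl

lemma KO_link_pair_inner {X : WSC V} {n : ℕ} (hX : X.IsWSC n) {e : ℕ} {η : Finset V}
    (hη : η ∈ X.K e) {a : Finset V} (ha : a ∈ (X.link η).K 1) (f : Finset V → ℝ) :
    ∑ b ∈ ((X.link η).K 1).filter (fun b => a ∪ b ∈ (X.link η).K 2), f (η ∪ b)
      = ∑ τ' ∈ (X.K (e+1)).filter
          (fun τ' => (η ∪ a) ∪ τ' ∈ X.K (e+2) ∧ (η ∪ a) ∩ τ' = η), f τ' := by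
  obtain ⟨hηf, hηc⟩ := KO_mem_K.mp hη
  obtain ⟨haf, hac⟩ := KO_mem_K.mp ha
  obtain ⟨haX, hadisj, haun⟩ := KO_link_faces.mp haf
  refine Finset.sum_nbij' (fun b => η ∪ b) (fun τ' => τ' \ η) ?_ ?_ ?_ ?_ ?_
  · intro b hb
    obtain ⟨hbK, habK⟩ := Finset.mem_filter.mp hb
    obtain ⟨hbf, hbc⟩ := KO_mem_K.mp hbK
    obtain ⟨hbX, hbdisj, hbun⟩ := KO_link_faces.mp hbf
    obtain ⟨habf, habc⟩ := KO_mem_K.mp habK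
    obtain ⟨habX, habdisj, habun⟩ := KO_link_faces.mp habf
    have hdb : Disjoint η b := (Finset.disjoint_iff_inter_eq_empty.mpr hbdisj).symm
    have hdab : Disjoint η (a ∪ b) := (Finset.disjoint_iff_inter_eq_empty.mpr habdisj).symm
    have habE : a ∩ b = ∅ := by
      have h1 := Finset.card_union_add_card_inter a b
      rw [habc, hac, hbc] at h1
      have h2 : (a ∩ b).card = 0 := by omega
      exact Finset.card_eq_zero.mp h2
    refine Finset.mem_filter.mpr ⟨KO_mem_K.mpr ⟨hbun, by
        rw [Finset.card_union_of_disjoint hdb, hηc, hbc]⟩, ?_, ?_⟩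
    · rw [← Finset.union_union_distrib_left]
      exact KO_mem_K.mpr ⟨habun, by rw [Finset.card_union_of_disjoint hdab, hηc, habc]⟩
    · rw [← Finset.union_inter_distrib_left, habE, Finset.union_empty]
  · intro τ' hτ'
    obtain ⟨hτ'K, hu, hi⟩ := Finset.mem_filter.mp hτ'
    obtain ⟨hτ'f, hτ'c⟩ := KO_mem_K.mp hτ'K
    obtain ⟨huf, huc⟩ := KO_mem_K.mp hu
    have hsubη : η ⊆ τ' := by
      rw [← hi]; exact Finset.inter_subset_right
    have hbdisj : (τ' \ η) ∩ η = ∅ := Finset.sdiff_inter_self η τ'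
    have hbun : η ∪ (τ' \ η) = τ' := Finset.union_sdiff_of_subset hsubη
    have hbK : τ' \ η ∈ (X.link η).K 1 := by
      refine KO_mem_K.mpr ⟨KO_link_faces.mpr ⟨KO_down hX hτ'f Finset.sdiff_subset, hbdisj, ?_⟩, ?_⟩
      · rw [hbun]; exact hτ'f
      · rw [Finset.card_sdiff_of_subset hsubη, hτ'c, hηc]; omega
    refine Finset.mem_filter.mpr ⟨hbK, ?_⟩
    -- a ∪ (τ' \ η) ∈ (X.link η).K 2
    have hsetσ : η ∪ (a ∪ (τ' \ η)) = (η ∪ a) ∪ τ' := by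
      rw [Finset.union_union_distrib_left, hbun]
    have hd1 : (a ∪ (τ' \ η)) ∩ η = ∅ := by
      rw [Finset.union_inter_distrib_right, hadisj, hbdisj, Finset.union_empty]
    have hdisjη : Disjoint η (a ∪ (τ' \ η)) :=
      (Finset.disjoint_iff_inter_eq_empty.mpr hd1).symm
    have hσf : η ∪ (a ∪ (τ' \ η)) ∈ X.faces := by rw [hsetσ]; exact huf
    refine KO_mem_K.mpr ⟨KO_link_faces.mpr ⟨KO_down hX hσf Finset.subset_union_right, hd1, hσf⟩, ?_⟩
    have hcard : (η ∪ (a ∪ (τ' \ η))).card = e + 2 := by rw [hsetσ, huc]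
    rw [Finset.card_union_of_disjoint hdisjη, hηc] at hcard
    omega
  · intro b hb
    obtain ⟨hbK, -⟩ := Finset.mem_filter.mp hb
    obtain ⟨hbf, -⟩ := KO_mem_K.mp hbK
    obtain ⟨-, hbdisj, -⟩ := KO_link_faces.mp hbf
    exact Finset.union_sdiff_cancel_left ((Finset.disjoint_iff_inter_eq_empty.mpr hbdisj).symm)
  · intro τ' hτ'
    obtain ⟨-, -, hi⟩ := Finset.mem_filter.mp hτ'
    have hsubη : η ⊆ τ' := by rw [← hi]; exact Finset.inter_subset_right
    exact Finset.union_sdiff_of_subset hsubη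
  · intro b _
    rfl

lemma KO_link_hm1 {X : WSC V} {n : ℕ} (hX : X.IsWSC n) {e : ℕ} (hen : e + 1 ≤ n) {η : Finset V}
    (hη : η ∈ X.K e) :
    ∀ a ∈ (X.link η).K 1, ∑ b ∈ ((X.link η).K 1).filter (fun b => a ∪ b ∈ (X.link η).K 2),
      (X.link η).m (a ∪ b) = (X.link η).m a := by
  intro a ha
  obtain ⟨hηf, hηc⟩ := KO_mem_K.mp hη
  obtain ⟨haf, hac⟩ := KO_mem_K.mp ha
  obtain ⟨haX, hadisj, haun⟩ := KO_link_faces.mp haf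
  have hdη : Disjoint η a := (Finset.disjoint_iff_inter_eq_empty.mpr hadisj).symm
  have hτK : η ∪ a ∈ X.K (e+1) :=
    KO_mem_K.mpr ⟨haun, by rw [Finset.card_union_of_disjoint hdη, hηc, hac]⟩
  show ∑ b ∈ ((X.link η).K 1).filter (fun b => a ∪ b ∈ (X.link η).K 2),
      X.m (η ∪ (a ∪ b)) = X.m (η ∪ a)
  rw [KO_weight_eq hX hen hτK]
  refine Finset.sum_nbij' (fun b => η ∪ (a ∪ b)) (fun σ => σ \ (η ∪ a)) ?_ ?_ ?_ ?_ ?_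
  · intro b hb
    obtain ⟨hbK, habK⟩ := Finset.mem_filter.mp hb
    obtain ⟨habf, habc⟩ := KO_mem_K.mp habK
    obtain ⟨habX, habdisj, habun⟩ := KO_link_faces.mp habf
    have hdab : Disjoint η (a ∪ b) := (Finset.disjoint_iff_inter_eq_empty.mpr habdisj).symm
    refine Finset.mem_filter.mpr ⟨KO_mem_K.mpr ⟨habun, by
      rw [Finset.card_union_of_disjoint hdab, hηc, habc]⟩, ?_⟩
    exact Finset.union_subset_union (Finset.Subset.refl η) Finset.subset_union_left
  · intro σ hσ
    obtain ⟨hσK, hsub⟩ := Finset.mem_filter.mp hσ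
    obtain ⟨hσf, hσc⟩ := KO_mem_K.mp hσK
    have hτc : (η ∪ a).card = e + 1 := by rw [Finset.card_union_of_disjoint hdη, hηc, hac]
    have hbc : (σ \ (η ∪ a)).card = 1 := by
      rw [Finset.card_sdiff_of_subset hsub, hσc, hτc]
      omega
    have hbdisjτ : (σ \ (η ∪ a)) ∩ (η ∪ a) = ∅ := Finset.sdiff_inter_self (η ∪ a) σ
    have hbX : σ \ (η ∪ a) ∈ X.faces := KO_down hX hσf Finset.sdiff_subset
    have hbdisjη : (σ \ (η ∪ a)) ∩ η = ∅ := by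
      have h1 : (σ \ (η ∪ a)) ∩ η ⊆ (σ \ (η ∪ a)) ∩ (η ∪ a) :=
        Finset.inter_subset_inter (Finset.Subset.refl _) Finset.subset_union_left
      rw [hbdisjτ] at h1
      exact Finset.subset_empty.mp h1
    have hbdisja : (σ \ (η ∪ a)) ∩ a = ∅ := by
      have h1 : (σ \ (η ∪ a)) ∩ a ⊆ (σ \ (η ∪ a)) ∩ (η ∪ a) :=
        Finset.inter_subset_inter (Finset.Subset.refl _) Finset.subset_union_right
      rw [hbdisjτ] at h1
      exact Finset.subset_empty.mp h1
    have hσeq : η ∪ (a ∪ (σ \ (η ∪ a))) = σ := by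
      rw [← Finset.union_assoc]
      exact Finset.union_sdiff_of_subset hsub
    have hbK : σ \ (η ∪ a) ∈ (X.link η).K 1 := by
      refine KO_mem_K.mpr ⟨KO_link_faces.mpr ⟨hbX, hbdisjη, ?_⟩, hbc⟩
      refine KO_down hX hσf ?_
      intro x hx
      rcases Finset.mem_union.mp hx with h | h
      · exact hsub (Finset.mem_union_left a h)
      · exact (Finset.mem_sdiff.mp h).1
    refine Finset.mem_filter.mpr ⟨hbK, ?_⟩
    have habdisj : (a ∪ (σ \ (η ∪ a))) ∩ η = ∅ := by
      rw [Finset.union_inter_distrib_right, hadisj, hbdisjη, Finset.union_empty]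
    have habun : η ∪ (a ∪ (σ \ (η ∪ a))) ∈ X.faces := by rw [hσeq]; exact hσf
    have habX : a ∪ (σ \ (η ∪ a)) ∈ X.faces := KO_down hX habun Finset.subset_union_right
    refine KO_mem_K.mpr ⟨KO_link_faces.mpr ⟨habX, habdisj, habun⟩, ?_⟩
    have hdη2 : Disjoint η (a ∪ (σ \ (η ∪ a))) :=
      (Finset.disjoint_iff_inter_eq_empty.mpr habdisj).symm
    have := Finset.card_union_of_disjoint hdη2
    rw [hσeq, hσc, hηc] at this
    omega
  · intro b hb
    obtain ⟨hbK, habK⟩ := Finset.mem_filter.mp hb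
    obtain ⟨hbf, hbc⟩ := KO_mem_K.mp hbK
    obtain ⟨hbX, hbdisj, -⟩ := KO_link_faces.mp hbf
    obtain ⟨habf, habc⟩ := KO_mem_K.mp habK
    have habE : a ∩ b = ∅ := by
      have h1 := Finset.card_union_add_card_inter a b
      rw [habc, hac, hbc] at h1
      have h2 : (a ∩ b).card = 0 := by omega
      exact Finset.card_eq_zero.mp h2
    have hd : Disjoint (η ∪ a) b := by
      rw [Finset.disjoint_union_left]
      constructor
      · exact ((Finset.disjoint_iff_inter_eq_empty.mpr hbdisj).symm)
      · exact Finset.disjoint_iff_inter_eq_empty.mpr habE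
    rw [← Finset.union_assoc]
    exact Finset.union_sdiff_cancel_left hd
  · intro σ hσ
    obtain ⟨-, hsub⟩ := Finset.mem_filter.mp hσ
    rw [← Finset.union_assoc]
    exact Finset.union_sdiff_of_subset hsub
  · intro b _
    rfl

lemma KO_pairSum_link {X : WSC V} {n : ℕ} (hX : X.IsWSC n) {e : ℕ} {η : Finset V}
    (hη : η ∈ X.K e) (φ : Finset V → ℝ) :
    KOpairSum (X.link η) 1 (WSC.localize φ η)
      = ∑ τ ∈ (X.K (e+1)).filter (fun τ => η ⊆ τ),
          ∑ τ' ∈ (X.K (e+1)).filter (fun τ' => τ ∪ τ' ∈ X.K (e+2) ∧ τ ∩ τ' = η),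
            X.m (τ ∪ τ') * (φ τ * φ τ') := by
  unfold KOpairSum
  have hstep : ∀ a ∈ (X.link η).K 1,
      ∑ b ∈ ((X.link η).K 1).filter (fun b => a ∪ b ∈ (X.link η).K (1+1)),
        (X.link η).m (a ∪ b) * (WSC.localize φ η a * WSC.localize φ η b)
      = ∑ τ' ∈ (X.K (e+1)).filter
            (fun τ' => (η ∪ a) ∪ τ' ∈ X.K (e+2) ∧ (η ∪ a) ∩ τ' = η),
          X.m ((η ∪ a) ∪ τ') * (φ (η ∪ a) * φ τ') := by
    intro a ha
    rw [← KO_link_pair_inner hX hη ha (fun τ' => X.m ((η ∪ a) ∪ τ') * (φ (η ∪ a) * φ τ'))]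
    refine Finset.sum_congr rfl fun b hb => ?_
    show X.m (η ∪ (a ∪ b)) * (φ (η ∪ a) * φ (η ∪ b))
        = X.m ((η ∪ a) ∪ (η ∪ b)) * (φ (η ∪ a) * φ (η ∪ b))
    rw [Finset.union_union_distrib_left]
  rw [Finset.sum_congr rfl hstep]
  exact KO_link_sum hX hη 1 (fun τ => ∑ τ' ∈ (X.K (e+1)).filter
    (fun τ' => τ ∪ τ' ∈ X.K (e+2) ∧ τ ∩ τ' = η), X.m (τ ∪ τ') * (φ τ * φ τ'))

lemma KO_pairSum_decomp {X : WSC V} {n : ℕ} (hX : X.IsWSC n) {e : ℕ} (φ : Finset V → ℝ) :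
    KOpairSum X (e+1) φ = ∑ η ∈ X.K e, KOpairSum (X.link η) 1 (WSC.localize φ η) := by
  rw [Finset.sum_congr rfl (fun η hη => KO_pairSum_link hX hη φ)]
  rw [KO_sum_swap_filter (X.K e) (X.K (e+1)) (fun η τ => η ⊆ τ)
    (fun η τ => ∑ τ' ∈ (X.K (e+1)).filter (fun τ' => τ ∪ τ' ∈ X.K (e+2) ∧ τ ∩ τ' = η),
      X.m (τ ∪ τ') * (φ τ * φ τ'))]
  unfold KOpairSum
  refine Finset.sum_congr rfl fun τ hτ => ?_
  obtain ⟨hτf, hτc⟩ := KO_mem_K.mp hτ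
  have hmap : ∀ τ' ∈ (X.K (e+1)).filter (fun τ' => τ ∪ τ' ∈ X.K (e+1+1)),
      τ ∩ τ' ∈ (X.K e).filter (fun η => η ⊆ τ) := by
    intro τ' hτ'
    obtain ⟨hτ'K, hu⟩ := Finset.mem_filter.mp hτ'
    obtain ⟨hτ'f, hτ'c⟩ := KO_mem_K.mp hτ'K
    obtain ⟨huf, huc⟩ := KO_mem_K.mp hu
    refine Finset.mem_filter.mpr ⟨KO_mem_K.mpr
      ⟨KO_down hX hτf Finset.inter_subset_left, ?_⟩, Finset.inter_subset_left⟩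
    have h1 := Finset.card_union_add_card_inter τ τ'
    omega
  have hfib := Finset.sum_fiberwise_of_maps_to hmap
    (fun τ' => X.m (τ ∪ τ') * (φ τ * φ τ'))
  rw [← hfib]
  refine Finset.sum_congr rfl fun η hη => ?_
  congr 1
  rw [Finset.filter_filter]

lemma KO_secondEig_le {X : WSC V} {n : ℕ} (lam : ℝ) (hexp : X.OneSided n lam)
    {k : ℕ} (hk : k < n) {η : Finset V} (hη : η ∈ X.K k) :
    (X.link η).secondEig ≤ lam := by
  have hmem : (X.link η).secondEig ∈ {r : ℝ | ∃ τ ∈ X.K k, r = (X.link τ).secondEig} :=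
    ⟨η, hη, rfl⟩
  have heq : {r : ℝ | ∃ τ ∈ X.K k, r = (X.link τ).secondEig}
      = ↑((X.K k).image (fun τ => (X.link τ).secondEig)) := by
    ext r
    simp [eq_comm]
  have hbdd : BddAbove {r : ℝ | ∃ τ ∈ X.K k, r = (X.link τ).secondEig} := by
    rw [heq]
    exact Finset.bddAbove _
  exact le_trans (le_csSup hbdd hmem) (hexp k hk)

end KOAux

/-- Let `0 ≤ k ≤ n-1`, `0 < ε < 1`, `0 ≤ λ ≤ 1`, and let `A ⊆ X(k)` be
`ε`-locally thin, i.e. `F(A) = max_{τ ∈ A} (1/(k+1)) Σ_{η ∈ X(k-1), η ⊂ τ}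
((1/m(η)) Σ_{τ' ∈ A, η ⊂ τ'} m(τ')) ≤ ε`. If `X` is a one-sided `λ`-local spectral
expander, then `‖M⁺_k χ_A‖ ≤ (1/√(k+2) + √(ε+λ)) ‖χ_A‖`. -/
theorem mixing_locally_thin {V : Type*} [DecidableEq V] (X : WSC V) (n : ℕ)
    (hX : X.IsWSC n) (k : ℕ) (hk : k < n) (ε lam : ℝ) (hε0 : 0 < ε) (hε1 : ε < 1)
    (hl0 : 0 ≤ lam) (hl1 : lam ≤ 1) (A : Finset (Finset V)) (hA : A ⊆ X.K (k + 1))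
    (hthin : ∀ τ ∈ A,
      (1 / ((k : ℝ) + 1)) * ∑ η ∈ (X.K k).filter (fun η => η ⊆ τ),
        (1 / X.m η) * ∑ τ' ∈ A.filter (fun τ' => η ⊆ τ'), X.m τ' ≤ ε)
    (hexp : X.OneSided n lam) :
    X.norm (k + 1) (X.Mup (k + 1) (fun σ => if σ ∈ A then (1 : ℝ) else 0)) ≤
      (1 / Real.sqrt ((k : ℝ) + 2) + Real.sqrt (ε + lam)) *
        X.norm (k + 1) (fun σ => if σ ∈ A then (1 : ℝ) else 0) := by
  classical
  have hkn : k + 1 ≤ n := hk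
  set φ : Finset V → ℝ := fun σ => if σ ∈ A then (1:ℝ) else 0 with hφ
  have hεl : (0:ℝ) ≤ ε + lam := by linarith
  have hnormφ : X.normSq (k+1) φ = ∑ τ ∈ A, X.m τ := by
    unfold WSC.normSq WSC.inn
    calc ∑ τ ∈ X.K (k+1), X.m τ * (φ τ * φ τ)
        = ∑ τ ∈ X.K (k+1), (if τ ∈ A then X.m τ else 0) := by
          refine Finset.sum_congr rfl fun τ _ => ?_
          by_cases h : τ ∈ A <;> simp [hφ, h]
      _ = ∑ τ ∈ X.K (k+1) ∩ A, X.m τ := Finset.sum_ite_mem _ _ _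
      _ = ∑ τ ∈ A, X.m τ := by rw [Finset.inter_eq_right.mpr hA]
  have hnn : 0 ≤ X.normSq (k+1) φ := KO_normSq_nonneg hX _ _
  have hηbound : ∀ η ∈ X.K k,
      KOpairSum (X.link η) 1 (WSC.localize φ η)
        ≤ (∑ τ ∈ A.filter (fun τ => η ⊆ τ), X.m τ)^2 / X.m η
          + lam * ∑ τ ∈ (X.K (k+1)).filter (fun τ => η ⊆ τ), X.m τ * (φ τ * φ τ) := by
    intro η hη
    obtain ⟨hηf, hηc⟩ := KO_mem_K.mp hη
    have hpos1 : ∀ a ∈ (X.link η).K 1, 0 < (X.link η).m a := by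
      intro a ha
      obtain ⟨haf, -⟩ := KO_mem_K.mp ha
      obtain ⟨-, -, hun⟩ := KO_link_faces.mp haf
      exact KO_m_pos hX hun
    have hpos2 : ∀ p ∈ (X.link η).K 2, 0 ≤ (X.link η).m p := by
      intro p hp
      obtain ⟨hpf, -⟩ := KO_mem_K.mp hp
      obtain ⟨-, -, hun⟩ := KO_link_faces.mp hpf
      exact (KO_m_pos hX hun).le
    have hm0pos : 0 < (X.link η).m ∅ := by
      show 0 < X.m (η ∪ ∅)
      rw [Finset.union_empty]
      exact KO_m_pos hX hηf
    have hTB := KO_T_bound (X.link η) lam hl0 hpos1 hpos2 hm0pos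
      (KO_link_m0 hX (by omega) hη) (KO_link_hm1 hX (by omega) hη)
      (KO_secondEig_le lam hexp hk hη) (WSC.localize φ η)
    have ht1 : ∑ a ∈ (X.link η).K 1, (X.link η).m a * WSC.localize φ η a
        = ∑ τ ∈ A.filter (fun τ => η ⊆ τ), X.m τ := by
      calc ∑ a ∈ (X.link η).K 1, (X.link η).m a * WSC.localize φ η a
          = ∑ τ ∈ (X.K (k+1)).filter (fun τ => η ⊆ τ), X.m τ * φ τ :=
            KO_link_sum hX hη 1 (fun τ => X.m τ * φ τ)
        _ = ∑ τ ∈ (X.K (k+1)).filter (fun τ => η ⊆ τ), (if τ ∈ A then X.m τ else 0) := by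
            refine Finset.sum_congr rfl fun τ _ => ?_
            by_cases h : τ ∈ A <;> simp [hφ, h]
        _ = ∑ τ ∈ ((X.K (k+1)).filter (fun τ => η ⊆ τ)) ∩ A, X.m τ :=
            Finset.sum_ite_mem _ _ _
        _ = ∑ τ ∈ A.filter (fun τ => η ⊆ τ), X.m τ := by
            congr 1
            ext τ
            simp only [Finset.mem_inter, Finset.mem_filter]
            constructor
            · rintro ⟨⟨-, h2⟩, h3⟩; exact ⟨h3, h2⟩
            · rintro ⟨h1, h2⟩; exact ⟨⟨hA h1, h2⟩, h1⟩
    have ht2 : (X.link η).normSq 1 (WSC.localize φ η)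
        = ∑ τ ∈ (X.K (k+1)).filter (fun τ => η ⊆ τ), X.m τ * (φ τ * φ τ) :=
      KO_link_sum hX hη 1 (fun τ => X.m τ * (φ τ * φ τ))
    have hmE : (X.link η).m ∅ = X.m η := by
      show X.m (η ∪ ∅) = X.m η
      rw [Finset.union_empty]
    rw [ht1, ht2, hmE] at hTB
    exact hTB
  have hpair : KOpairSum X (k+1) φ ≤ ((k:ℝ)+1) * (ε + lam) * X.normSq (k+1) φ := by
    rw [KO_pairSum_decomp hX φ]
    have hsum1 : ∑ η ∈ X.K k, (∑ τ ∈ A.filter (fun τ => η ⊆ τ), X.m τ)^2 / X.m η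
        ≤ ((k:ℝ)+1) * ε * X.normSq (k+1) φ := by
      have hW : ∀ η ∈ X.K k, (∑ τ ∈ A.filter (fun τ => η ⊆ τ), X.m τ)^2 / X.m η
          = ∑ τ ∈ A.filter (fun τ => η ⊆ τ),
              X.m τ * ((∑ τ' ∈ A.filter (fun τ' => η ⊆ τ'), X.m τ') / X.m η) := by
        intro η hη
        rw [← Finset.sum_mul, sq, mul_div_assoc]
      rw [Finset.sum_congr rfl hW]
      rw [KO_sum_swap_filter (X.K k) A (fun η τ => η ⊆ τ)
        (fun η τ => X.m τ * ((∑ τ' ∈ A.filter (fun τ' => η ⊆ τ'), X.m τ') / X.m η))]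
      have hk1 : (0:ℝ) < (k:ℝ)+1 := by positivity
      calc ∑ τ ∈ A, ∑ η ∈ (X.K k).filter (fun η => η ⊆ τ),
            X.m τ * ((∑ τ' ∈ A.filter (fun τ' => η ⊆ τ'), X.m τ') / X.m η)
          ≤ ∑ τ ∈ A, X.m τ * (((k:ℝ)+1) * ε) := by
            refine Finset.sum_le_sum fun τ hτA => ?_
            rw [← Finset.mul_sum]
            refine mul_le_mul_of_nonneg_left ?_ (KO_m_pos hX (KO_mem_K.mp (hA hτA)).1).le
            have hth := hthin τ hτA
            have hS : ∑ η ∈ (X.K k).filter (fun η => η ⊆ τ),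
                (∑ τ' ∈ A.filter (fun τ' => η ⊆ τ'), X.m τ') / X.m η
                = ∑ η ∈ (X.K k).filter (fun η => η ⊆ τ),
                    (1 / X.m η) * ∑ τ' ∈ A.filter (fun τ' => η ⊆ τ'), X.m τ' := by
              refine Finset.sum_congr rfl fun η _ => ?_
              rw [one_div, inv_mul_eq_div]
            rw [hS]
            have h2 := mul_le_mul_of_nonneg_left hth hk1.le
            rw [← mul_assoc, mul_one_div_cancel hk1.ne', one_mul] at h2
            linarith
        _ = ((k:ℝ)+1) * ε * ∑ τ ∈ A, X.m τ := by rw [← Finset.sum_mul]; ring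
        _ = ((k:ℝ)+1) * ε * X.normSq (k+1) φ := by rw [hnormφ]
    have hsum2 : ∑ η ∈ X.K k, ∑ τ ∈ (X.K (k+1)).filter (fun τ => η ⊆ τ), X.m τ * (φ τ * φ τ)
        = ((k:ℝ)+1) * X.normSq (k+1) φ := by
      rw [KO_sum_swap_filter (X.K k) (X.K (k+1)) (fun η τ => η ⊆ τ)
        (fun η τ => X.m τ * (φ τ * φ τ))]
      unfold WSC.normSq WSC.inn
      rw [Finset.mul_sum]
      refine Finset.sum_congr rfl fun τ hτ => ?_
      rw [Finset.sum_const, KO_card_K_filter hX hτ, nsmul_eq_mul]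
      push_cast
      ring
    calc ∑ η ∈ X.K k, KOpairSum (X.link η) 1 (WSC.localize φ η)
        ≤ ∑ η ∈ X.K k, ((∑ τ ∈ A.filter (fun τ => η ⊆ τ), X.m τ)^2 / X.m η
            + lam * ∑ τ ∈ (X.K (k+1)).filter (fun τ => η ⊆ τ), X.m τ * (φ τ * φ τ)) :=
          Finset.sum_le_sum hηbound
      _ = (∑ η ∈ X.K k, (∑ τ ∈ A.filter (fun τ => η ⊆ τ), X.m τ)^2 / X.m η)
            + lam * ∑ η ∈ X.K k, ∑ τ ∈ (X.K (k+1)).filter (fun τ => η ⊆ τ),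
                X.m τ * (φ τ * φ τ) := by
          rw [Finset.sum_add_distrib, Finset.mul_sum]
      _ ≤ ((k:ℝ)+1) * ε * X.normSq (k+1) φ + lam * (((k:ℝ)+1) * X.normSq (k+1) φ) := by
          rw [hsum2]
          linarith [hsum1]
      _ = ((k:ℝ)+1) * (ε + lam) * X.normSq (k+1) φ := by ring
  have hk2 : (0:ℝ) < (k:ℝ)+2 := by positivity
  have hc1 : (((k+1:ℕ)):ℝ) + 1 = (k:ℝ)+2 := by push_cast; ring
  have h1 := KO_inn_Mup_pair hX (k+1) φ
  rw [hc1] at h1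
  have hinnb : X.inn (k+1) (X.Mup (k+1) φ) φ
      ≤ (1/((k:ℝ)+2) + (ε+lam)) * X.normSq (k+1) φ := by
    have h2 : X.inn (k+1) (X.Mup (k+1) φ) φ
        = (X.normSq (k+1) φ + KOpairSum X (k+1) φ) / ((k:ℝ)+2) := by
      rw [eq_div_iff hk2.ne', mul_comm]
      exact h1
    rw [h2]
    have hP : KOpairSum X (k+1) φ ≤ ((k:ℝ)+2) * ((ε+lam) * X.normSq (k+1) φ) := by
      nlinarith [mul_nonneg hεl hnn]
    calc (X.normSq (k+1) φ + KOpairSum X (k+1) φ) / ((k:ℝ)+2)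
        ≤ (X.normSq (k+1) φ + ((k:ℝ)+2) * ((ε+lam) * X.normSq (k+1) φ)) / ((k:ℝ)+2) := by
          gcongr
      _ = (1/((k:ℝ)+2) + (ε+lam)) * X.normSq (k+1) φ := by
          field_simp
  have hfin : X.normSq (k+1) (X.Mup (k+1) φ)
      ≤ (1/((k:ℝ)+2) + (ε+lam)) * X.normSq (k+1) φ :=
    le_trans (KO_normSq_Mup_le_inn hX hkn φ) hinnb
  show X.norm (k+1) (X.Mup (k+1) φ)
      ≤ (1 / Real.sqrt ((k:ℝ) + 2) + Real.sqrt (ε + lam)) * X.norm (k+1) φ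
  unfold WSC.norm
  calc Real.sqrt (X.normSq (k+1) (X.Mup (k+1) φ))
      ≤ Real.sqrt ((1/((k:ℝ)+2) + (ε+lam)) * X.normSq (k+1) φ) := Real.sqrt_le_sqrt hfin
    _ = Real.sqrt (1/((k:ℝ)+2) + (ε+lam)) * Real.sqrt (X.normSq (k+1) φ) :=
        Real.sqrt_mul (add_nonneg (by positivity) hεl) _
    _ ≤ (Real.sqrt (1/((k:ℝ)+2)) + Real.sqrt (ε+lam)) * Real.sqrt (X.normSq (k+1) φ) :=
        mul_le_mul_of_nonneg_right (KO_sqrt_add_le _ _ (by positivity) hεl)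
          (Real.sqrt_nonneg _)
    _ = (1/Real.sqrt ((k:ℝ)+2) + Real.sqrt (ε+lam)) * Real.sqrt (X.normSq (k+1) φ) := by
        rw [one_div, one_div, Real.sqrt_inv]
end
end
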